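/- arXiv:1705.04501 — 6 statements merged into one kernel-verified Lean document; each statement's English description precedes it below -/
import Mathlib

section
/- For every positive integer p there exists a constant K(p) > 0, depending only on p, with the following property: for every field K, every eps > 0, every unital K-algebra B equipped with a pseudo-rank function N, every unital von Neumann regular K-subalgebra A of B, and every K-algebra homomorphism rho : M_p(K) -> B such that for all 1 <= i, j <= p there exists a in A with N(rho(e_ij) - a) < eps (where e_ij are the canonical matrix units of M_p(K)), there exists a K-algebra homomorphism psi : M_p(K) -> A with N(rho(e_ij) - psi(e_ij)) < K(p) * eps for all 1 <= i, j <= p. -/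
open scoped TensorProduct Kronecker

noncomputable section

namespace AraClaramunt

/-! ### Pseudo-rank functions and rank metric notions -/

/-- A pseudo-rank function on a unital ring. -/
structure IsPseudoRankFunction {R : Type*} [Ring R] (N : R → ℝ) : Prop where
  nonneg : ∀ x : R, 0 ≤ N x
  le_one : ∀ x : R, N x ≤ 1
  map_one : N 1 = 1
  subadditive : ∀ a b : R, N (a + b) ≤ N a + N b
  mul_le_left : ∀ a b : R, N (a * b) ≤ N a
  mul_le_right : ∀ a b : R, N (a * b) ≤ N b
  add_of_orthogonal : ∀ e f : R, IsIdempotentElem e → IsIdempotentElem f →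
    e * f = 0 → f * e = 0 → N (e + f) = N e + N f

/-- A rank function is a faithful pseudo-rank function. -/
def IsRankFunction {R : Type*} [Ring R] (N : R → ℝ) : Prop :=
  IsPseudoRankFunction N ∧ ∀ x : R, N x = 0 → x = 0

/-- Cauchy sequence for the pseudo-metric `d(x,y) = N (x - y)`. -/
def RankCauchy {R : Type*} [Ring R] (N : R → ℝ) (u : ℕ → R) : Prop :=
  ∀ ε : ℝ, 0 < ε → ∃ n₀ : ℕ, ∀ m n : ℕ, n₀ ≤ m → n₀ ≤ n → N (u m - u n) < ε

/-- Convergence for the pseudo-metric `d(x,y) = N (x - y)`. -/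
def RankTendsto {R : Type*} [Ring R] (N : R → ℝ) (u : ℕ → R) (x : R) : Prop :=
  ∀ ε : ℝ, 0 < ε → ∃ n₀ : ℕ, ∀ n : ℕ, n₀ ≤ n → N (u n - x) < ε

/-- Completeness with respect to the pseudo-metric `d(x,y) = N (x - y)`. -/
def RankComplete {R : Type*} [Ring R] (N : R → ℝ) : Prop :=
  ∀ u : ℕ → R, RankCauchy N u → ∃ x : R, RankTendsto N u x

/-- Density of a subset with respect to the pseudo-metric `d(x,y) = N (x - y)`. -/
def RankDense {R : Type*} [Ring R] (N : R → ℝ) (S : Set R) : Prop :=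
  ∀ x : R, ∀ ε : ℝ, 0 < ε → ∃ y ∈ S, N (x - y) < ε

/-- von Neumann regularity. -/
def VNRegular (R : Type*) [Ring R] : Prop :=
  ∀ x : R, ∃ y : R, x = x * y * x

/-- A continuous factor: a simple, von Neumann regular, right and left self-injective ring
admitting a rank function whose image is all of `[0,1]`. -/
def IsContinuousFactor (R : Type*) [Ring R] : Prop :=
  IsSimpleRing R ∧ VNRegular R ∧ Module.Injective R R ∧ Module.Injective Rᵐᵒᵖ Rᵐᵒᵖ ∧
    ∃ N : R → ℝ, IsRankFunction N ∧ Set.range N = Set.Icc (0 : ℝ) 1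

/-- An extremal pseudo-rank function: an extreme point of the convex set of all
pseudo-rank functions. -/
def IsExtremalPseudoRankFunction {R : Type*} [Ring R] (N : R → ℝ) : Prop :=
  N ∈ Set.extremePoints ℝ {S : R → ℝ | IsPseudoRankFunction S}

/-! ### Matricial and ultramatricial algebras -/

/-- A matricial `K`-algebra. -/
def IsMatricialAlgebra (K : Type*) [Field K] (A : Type*) [Ring A] [Algebra K A] : Prop :=
  ∃ (k : ℕ) (n : Fin (k + 1) → ℕ), (∀ i, 0 < n i) ∧
    Nonempty (A ≃ₐ[K] ((i : Fin (k + 1)) → Matrix (Fin (n i)) (Fin (n i)) K))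

/-- An ultramatricial `K`-algebra: the increasing union of matricial subalgebras. -/
def IsUltramatricialAlgebra (K : Type*) [Field K] (B : Type*) [Ring B] [Algebra K B] : Prop :=
  ∃ C : ℕ → Subalgebra K B, (∀ n, C n ≤ C (n + 1)) ∧
    (∀ n, IsMatricialAlgebra K (C n)) ∧ (∀ b : B, ∃ n, b ∈ C n)

/-- `Q`, with rank function `N`, is the rank-metric completion of a direct limit of the matrix
algebras `M_{p n}(K)`: it is complete and carries a dense increasing tower of unital subalgebras
isomorphic to `M_{p n}(K)`. -/
def IsMatrixTowerCompletion (K : Type*) [Field K] (Q : Type*) [Ring Q] [Algebra K Q]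
    (N : Q → ℝ) (p : ℕ → ℕ) : Prop :=
  IsRankFunction N ∧ RankComplete N ∧
    ∃ A : ℕ → Subalgebra K Q, (∀ n, A n ≤ A (n + 1)) ∧
      (∀ n, Nonempty ((A n) ≃ₐ[K] Matrix (Fin (p n)) (Fin (p n)) K)) ∧
      RankDense N (⋃ n, (A n : Set Q))

/-- `Q` is (a copy of) von Neumann's continuous factor `M_K`, the completion of
`lim_n M_{2^n}(K)` with respect to its unique rank function. -/
def IsMK (K : Type*) [Field K] (Q : Type*) [Ring Q] [Algebra K Q] (N : Q → ℝ) : Prop :=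
  IsMatrixTowerCompletion K Q N (fun n => 2 ^ n)

/-- The canonical block-diagonal unital embedding `M_a(K) → M_b(K)`, `z ↦ z ⊗ 1_g`,
where `b = a * g`. -/
def blockEmbedFun (K : Type*) [Semiring K] {a : ℕ} (g b : ℕ) (h : a * g = b)
    (z : Matrix (Fin a) (Fin a) K) : Matrix (Fin b) (Fin b) K :=
  Matrix.reindex (finProdFinEquiv.trans (finCongr h)) (finProdFinEquiv.trans (finCongr h))
    (z ⊗ₖ (1 : Matrix (Fin g) (Fin g) K))

end AraClaramunt
namespace AraClaramunt

set_option maxHeartbeats 1000000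

section AuxiliaryProofs

open Finset

variable {B : Type*} [Ring B] {N : B → ℝ}

lemma N_zero (hN : IsPseudoRankFunction N) : N 0 = 0 := by
  have h := hN.add_of_orthogonal 0 0 (by simp [IsIdempotentElem]) (by simp [IsIdempotentElem])
    (by simp) (by simp)
  simp at h
  linarith

lemma N_neg (hN : IsPseudoRankFunction N) (x : B) : N (-x) = N x := by
  have h1 : N (x * (-1)) ≤ N x := hN.mul_le_left x (-1)
  have h2 : N ((-x) * (-1)) ≤ N (-x) := hN.mul_le_left (-x) (-1)
  simp at h1 h2
  linarith

lemma N_sub_symm (hN : IsPseudoRankFunction N) (x y : B) : N (x - y) = N (y - x) := by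
  rw [← N_neg hN (x - y)]; noncomm_ring

lemma N_tri (hN : IsPseudoRankFunction N) (x y z : B) : N (x - z) ≤ N (x - y) + N (y - z) := by
  have := hN.subadditive (x - y) (y - z)
  simpa using this

lemma N_le_add (hN : IsPseudoRankFunction N) (x y : B) : N x ≤ N (x - y) + N y := by
  have := hN.subadditive (x - y) y
  simpa using this

lemma N_sum_le (hN : IsPseudoRankFunction N) {ι : Type*} (s : Finset ι) (v : ι → B) :
    N (∑ i ∈ s, v i) ≤ ∑ i ∈ s, N (v i) := by
  classical
  induction s using Finset.induction_on with
  | empty => simp [N_zero hN]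
  | insert a s' h ih =>
      rw [Finset.sum_insert h, Finset.sum_insert h]
      exact le_trans (hN.subadditive _ _) (by linarith)

/-- difference of comparable idempotents -/
lemma N_idem_sub (hN : IsPseudoRankFunction N) {f f' : B} (hf : IsIdempotentElem f)
    (hf' : IsIdempotentElem f') (h1 : f * f' = f') (h2 : f' * f = f') :
    N (f - f') = N f - N f' := by
  have hidem : IsIdempotentElem (f - f') := by
    unfold IsIdempotentElem at *
    rw [sub_mul, mul_sub, mul_sub, hf, hf', h1, h2]; noncomm_ring
  have ho1 : (f - f') * f' = 0 := by rw [sub_mul, h1, hf']; noncomm_ring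
  have ho2 : f' * (f - f') = 0 := by rw [mul_sub, h2, hf']; noncomm_ring
  have := hN.add_of_orthogonal (f - f') f' hidem hf' ho1 ho2
  simp at this
  linarith

/-- Idempotent approximation in a regular ring (Lemma A). The element
`x*y + x - x*x*y` is idempotent if `x = x*y*x`, and within `N (x*x - x)` of `x`. -/
lemma lemA_idem {x y : B} (h : x = x * y * x) :
    IsIdempotentElem (x * y + x - x * x * y) := by
  unfold IsIdempotentElem
  have e1 : x * y * x = x := h.symm
  calc (x * y + x - x * x * y) * (x * y + x - x * x * y)
      = (x*y)*(x*y) + (x*y)*x - (x*y)*(x*x*y) + x*(x*y) + x*x - x*(x*x*y)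
        - ((x*x*y)*(x*y) + (x*x*y)*x - (x*x*y)*(x*x*y)) := by noncomm_ring
    _ = x * y + x - x * x * y := by
        have t1 : (x*y)*(x*y) = x*y := by
          calc (x*y)*(x*y) = (x*y*x)*y := by noncomm_ring
            _ = x*y := by rw [e1]
        have t2 : (x*y)*x = x := e1
        have t3 : (x*y)*(x*x*y) = x*x*y := by
          calc (x*y)*(x*x*y) = (x*y*x)*(x*y) := by noncomm_ring
            _ = x*(x*y) := by rw [e1]
            _ = x*x*y := by noncomm_ring
        have t4 : (x*x*y)*(x*y) = x*x*y := by
          calc (x*x*y)*(x*y) = x*((x*y*x)*y) := by noncomm_ring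
            _ = x*(x*y) := by rw [e1]
            _ = x*x*y := by noncomm_ring
        have t5 : (x*x*y)*x = x*x := by
          calc (x*x*y)*x = x*(x*y*x) := by noncomm_ring
            _ = x*x := by rw [e1]
        have t6 : (x*x*y)*(x*x*y) = x*(x*x*y) := by
          calc (x*x*y)*(x*x*y) = x*((x*y*x)*(x*y)) := by noncomm_ring
            _ = x*(x*(x*y)) := by rw [e1]
            _ = x*(x*x*y) := by noncomm_ring
        rw [t1, t2, t3, t4, t5, t6]; noncomm_ring

lemma lemA_close (hN : IsPseudoRankFunction N) (x y : B) :
    N (x - (x * y + x - x * x * y)) ≤ N (x * x - x) := by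
  have : x - (x * y + x - x * x * y) = (x * x - x) * y := by noncomm_ring
  rw [this]
  exact hN.mul_le_left _ _

/-- defect of being idempotent, controlled by distance to an idempotent -/
lemma idem_defect (hN : IsPseudoRankFunction N) {u : B} (hu : IsIdempotentElem u) (v : B) :
    N (v * v - v) ≤ 3 * N (v - u) := by
  have hid : v * v - v = (v - u) * v + u * (v - u) + (u - v) := by
    have : u * u = u := hu
    calc v*v - v = (v - u) * v + u * (v - u) + (u - v) + (u*u - u) := by noncomm_ring
      _ = (v - u) * v + u * (v - u) + (u - v) := by rw [this]; noncomm_ring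
  rw [hid]
  have h1 := hN.subadditive ((v - u) * v + u * (v - u)) (u - v)
  have h2 := hN.subadditive ((v - u) * v) (u * (v - u))
  have h3 := hN.mul_le_left (v - u) v
  have h4 := hN.mul_le_right u (v - u)
  have h5 : N (u - v) = N (v - u) := N_sub_symm hN u v
  linarith

variable {B : Type*} [Ring B]

lemma sum_orth_idem {ι : Type*} [DecidableEq ι] (s : Finset ι) (v : ι → B)
    (hI : ∀ k ∈ s, IsIdempotentElem (v k))
    (ho : ∀ j ∈ s, ∀ k ∈ s, j ≠ k → v j * v k = 0) :
    IsIdempotentElem (∑ k ∈ s, v k) ∧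
    (∀ k ∈ s, (∑ l ∈ s, v l) * v k = v k) ∧ (∀ k ∈ s, v k * (∑ l ∈ s, v l) = v k) := by
  have habs : ∀ k ∈ s, (∑ l ∈ s, v l) * v k = v k := by
    intro k hk
    rw [Finset.sum_mul, Finset.sum_eq_single_of_mem k hk]
    · exact hI k hk
    · intro l hl hlk; exact ho l hl k hk hlk
  have habs' : ∀ k ∈ s, v k * (∑ l ∈ s, v l) = v k := by
    intro k hk
    rw [Finset.mul_sum, Finset.sum_eq_single_of_mem k hk]
    · exact hI k hk
    · intro l hl hlk; exact ho k hk l hl (Ne.symm hlk)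
  refine ⟨?_, habs, habs'⟩
  unfold IsIdempotentElem
  rw [Finset.mul_sum]
  exact Finset.sum_congr rfl habs

lemma filter_sum_eq {p m : ℕ} (hm : m ≤ p) (f : ℕ → ℝ) :
    (∑ k ∈ Finset.univ.filter (fun k : Fin p => (k:ℕ) < m), f (k:ℕ))
      = ∑ k ∈ Finset.range m, f k := by
  rw [Finset.sum_filter]
  rw [Fin.sum_univ_eq_sum_range (fun k => if k < m then f k else 0) p]
  rw [← Finset.sum_filter]
  congr 1
  ext k
  simp only [Finset.mem_filter, Finset.mem_range]
  omega

theorem exists_orth_idem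
    {p : ℕ} {K : Type} [Field K] [Algebra K B]
    {N : B → ℝ} (hN : IsPseudoRankFunction N)
    {A : Subalgebra K B} (hreg : ∀ x ∈ A, ∃ y ∈ A, x = x * y * x)
    {ε : ℝ} (hε : 0 < ε)
    (e : Fin p → Fin p → B)
    (he : ∀ i j k l : Fin p, e i j * e k l = if j = k then e i l else 0)
    (ha : ∀ i j, ∃ a ∈ A, N (e i j - a) < ε) :
    ∃ g : Fin p → B,
      (∀ j : Fin p, g j ∈ A ∧ IsIdempotentElem (g j) ∧ N (g j - e j j) ≤ 4 * 9 ^ p * ε)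
      ∧ (∀ j k : Fin p, j ≠ k → g j * g k = 0) := by
  have he_same : ∀ i j l : Fin p, e i j * e j l = e i l := by
    intro i j l; have := he i j j l; simpa using this
  have he_ne : ∀ i j k l : Fin p, j ≠ k → e i j * e k l = 0 := by
    intro i j k l hjk; have := he i j k l; simpa [hjk] using this
  have heidem : ∀ i : Fin p, IsIdempotentElem (e i i) := fun i => he_same i i i
  have keyG : ∀ m, m ≤ p → ∃ g : Fin p → B,
      (∀ j : Fin p, (j:ℕ) < m →
        g j ∈ A ∧ IsIdempotentElem (g j) ∧ N (g j - e j j) ≤ 4 * 9 ^ (j:ℕ) * ε)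
      ∧ (∀ j k : Fin p, (j:ℕ) < m → (k:ℕ) < m → j ≠ k → g j * g k = 0) := by
    intro m
    induction m with
    | zero => exact fun _ => ⟨fun _ => 0, fun j hj => absurd hj (by omega), fun j k hj _ _ => absurd hj (by omega)⟩
    | succ m ih =>
      intro hm1
      obtain ⟨g, hg, horth⟩ := ih (by omega)
      have hmp : m < p := by omega
      set jm : Fin p := ⟨m, hmp⟩ with hjm_def
      set s := Finset.univ.filter (fun k : Fin p => (k:ℕ) < m) with hs_def
      have hmem_s : ∀ k : Fin p, k ∈ s ↔ (k:ℕ) < m := by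
        intro k; simp [hs_def]
      obtain ⟨hGidem, hGabs, hGabs'⟩ := sum_orth_idem s g
        (fun k hk => (hg k ((hmem_s k).1 hk)).2.1)
        (fun j hj k hk hjk => horth j k ((hmem_s j).1 hj) ((hmem_s k).1 hk) hjk)
      set G := ∑ k ∈ s, g k with hG_def
      set h := (1:B) - G with hh_def
      have hh : IsIdempotentElem h := hGidem.one_sub
      have hhA : h ∈ A := A.sub_mem A.one_mem (Subalgebra.sum_mem A
        (fun k hk => (hg k ((hmem_s k).1 hk)).1))
      obtain ⟨a, haA, hae⟩ := ha jm jm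
      set x := h * a * h with hx_def
      have hxA : x ∈ A := A.mul_mem (A.mul_mem hhA haA) hhA
      obtain ⟨y, hyA, hxyx⟩ := hreg x hxA
      set y' := h * y * h with hy'_def
      have hxh : x * h = x := by
        have e1 : (h*a*h)*h = (h*a)*(h*h) := by noncomm_ring
        rw [hx_def, e1, hh]
      have hhx : h * x = x := by
        have e1 : h*(h*a*h) = ((h*h)*a)*h := by noncomm_ring
        rw [hx_def, e1, hh]
      have hy'h : y' * h = y' := by
        have e1 : (h*y*h)*h = (h*y)*(h*h) := by noncomm_ring
        rw [hy'_def, e1, hh]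
      have hhy' : h * y' = y' := by
        have e1 : h*(h*y*h) = ((h*h)*y)*h := by noncomm_ring
        rw [hy'_def, e1, hh]
      have hxyx' : x = x * y' * x := by
        calc x = x * y * x := hxyx
          _ = (x * h) * y * (h * x) := by rw [hxh, hhx]
          _ = x * y' * x := by rw [hy'_def]; noncomm_ring
      set gnew := x * y' + x - x * x * y' with hgnew_def
      have hgnewI : IsIdempotentElem gnew := lemA_idem hxyx'
      have hy'A : y' ∈ A := A.mul_mem (A.mul_mem hhA hyA) hhA
      have hgnewA : gnew ∈ A := A.sub_mem (A.add_mem (A.mul_mem hxA hy'A) hxA)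
        (A.mul_mem (A.mul_mem hxA hxA) hy'A)
      have hgnewh : gnew * h = gnew ∧ h * gnew = gnew := by
        constructor
        · have expand : gnew * h = x * (y' * h) + x * h - x * x * (y' * h) := by
            rw [hgnew_def]; noncomm_ring
          rw [expand, hy'h, hxh, hgnew_def]
        · have expand : h * gnew = (h * x) * y' + h * x - (h * x) * x * y' := by
            rw [hgnew_def]; noncomm_ring
          rw [expand, hhx, hgnew_def]
      have hhg : ∀ k : Fin p, (k:ℕ) < m → h * g k = 0 ∧ g k * h = 0 := by
        intro k hk
        have hks : k ∈ s := (hmem_s k).2 hk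
        constructor
        · rw [hh_def, sub_mul, one_mul, hGabs k hks, sub_self]
        · rw [hh_def, mul_sub, mul_one, hGabs' k hks, sub_self]
      have hnew_orth : ∀ k : Fin p, (k:ℕ) < m → gnew * g k = 0 ∧ g k * gnew = 0 := by
        intro k hk
        constructor
        · rw [← hgnewh.1, mul_assoc, (hhg k hk).1, mul_zero]
        · rw [← hgnewh.2, ← mul_assoc, (hhg k hk).2, zero_mul]
      -- error bound
      set he' := (1:B) - ∑ k ∈ s, e k k with hhe'_def
      have hsum_e_orth : (∑ k ∈ s, e k k) * e jm jm = 0 := by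
        rw [Finset.sum_mul]
        apply Finset.sum_eq_zero
        intro k hk
        apply he_ne
        have hkm : (k:ℕ) < m := (hmem_s k).1 hk
        intro hkk
        rw [hkk] at hkm
        exact Nat.lt_irrefl m (by simpa [hjm_def] using hkm)
      have hsum_e_orth' : e jm jm * (∑ k ∈ s, e k k) = 0 := by
        rw [Finset.mul_sum]
        apply Finset.sum_eq_zero
        intro k hk
        apply he_ne
        have hkm : (k:ℕ) < m := (hmem_s k).1 hk
        intro hkk
        rw [← hkk] at hkm
        exact Nat.lt_irrefl m (by simpa [hjm_def] using hkm)
      have hhe'e : he' * e jm jm = e jm jm := by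
        rw [hhe'_def, sub_mul, one_mul, hsum_e_orth, sub_zero]
      have hehe' : e jm jm * he' = e jm jm := by
        rw [hhe'_def, mul_sub, mul_one, hsum_e_orth', sub_zero]
      have hstep : (he' * e jm jm) * he' = e jm jm := by rw [hhe'e, hehe']
      have hdecomp : x - e jm jm
          = (h - he') * (a * h) + he' * ((a - e jm jm) * h) + (he' * e jm jm) * (h - he') := by
        have expand : (h - he') * (a * h) + he' * ((a - e jm jm) * h)
            + (he' * e jm jm) * (h - he')
            = h * a * h - (he' * e jm jm) * he' := by noncomm_ring
        rw [expand, hstep, hx_def]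
      have hdiff_sum : h - he' = ∑ k ∈ s, (e k k - g k) := by
        rw [hh_def, hhe'_def, hG_def, Finset.sum_sub_distrib]
        noncomm_ring
      have hNdiff : N (h - he') ≤ ((9:ℝ)^m - 1) / 2 * ε := by
        rw [hdiff_sum]
        calc N (∑ k ∈ s, (e k k - g k)) ≤ ∑ k ∈ s, N (e k k - g k) := N_sum_le hN s _
          _ ≤ ∑ k ∈ s, (4 * 9^(k:ℕ) * ε) := by
              apply Finset.sum_le_sum
              intro k hk
              rw [N_sub_symm hN]
              exact (hg k ((hmem_s k).1 hk)).2.2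
          _ = ∑ k ∈ Finset.range m, (4 * 9^k * ε) := filter_sum_eq (by omega) (fun k => 4 * 9^k * ε)
          _ = (∑ k ∈ Finset.range m, (9:ℝ)^k) * (4*ε) := by
              rw [Finset.sum_mul]
              exact Finset.sum_congr rfl (fun k _ => by ring)
          _ = ((9:ℝ)^m - 1) / 2 * ε := by
              rw [geom_sum_eq (by norm_num : (9:ℝ) ≠ 1)]
              ring
      have hNx : N (x - e jm jm) ≤ (9:ℝ)^m * ε := by
        rw [hdecomp]
        have h1 := hN.subadditive ((h - he') * (a * h) + he' * ((a - e jm jm) * h))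
          ((he' * e jm jm) * (h - he'))
        have h2 := hN.subadditive ((h - he') * (a * h)) (he' * ((a - e jm jm) * h))
        have h3 : N ((h - he') * (a * h)) ≤ N (h - he') := hN.mul_le_left _ _
        have h4 : N (he' * ((a - e jm jm) * h)) ≤ N (a - e jm jm) := by
          calc N (he' * ((a - e jm jm) * h)) ≤ N ((a - e jm jm) * h) := hN.mul_le_right _ _
            _ ≤ N (a - e jm jm) := hN.mul_le_left _ _
        have h5 : N ((he' * e jm jm) * (h - he')) ≤ N (h - he') := hN.mul_le_right _ _
        have h6 : N (a - e jm jm) ≤ ε := le_of_lt (by rw [N_sub_symm hN]; exact hae)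
        have h7 : (1:ℝ) ≤ 9^m := one_le_pow₀ (by norm_num : (1:ℝ) ≤ 9)
        nlinarith [hN.nonneg (h - he')]
      have hNxx : N (x * x - x) ≤ 3 * ((9:ℝ)^m * ε) := by
        calc N (x * x - x) ≤ 3 * N (x - e jm jm) := idem_defect hN (heidem jm) x
          _ ≤ 3 * ((9:ℝ)^m * ε) := by linarith
      have hNgnew : N (gnew - e jm jm) ≤ 4 * 9^m * ε := by
        have t1 : N (gnew - x) ≤ 3 * ((9:ℝ)^m * ε) := by
          rw [N_sub_symm hN]
          calc N (x - gnew) ≤ N (x * x - x) := lemA_close hN x y'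
            _ ≤ 3 * ((9:ℝ)^m * ε) := hNxx
        calc N (gnew - e jm jm) ≤ N (gnew - x) + N (x - e jm jm) := N_tri hN _ _ _
          _ ≤ 4 * 9^m * ε := by linarith
      -- assemble
      have hne_val : ∀ l : Fin p, l ≠ jm → (l:ℕ) ≠ m := by
        intro l hl hc
        exact hl (Fin.ext hc)
      refine ⟨Function.update g jm gnew, ?_, ?_⟩
      · intro j hj
        by_cases hjc : j = jm
        · rw [hjc, Function.update_self]
          refine ⟨hgnewA, hgnewI, ?_⟩
          exact hNgnew
        · have hj' : (j:ℕ) < m := by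
            have := hne_val j hjc
            omega
          rw [Function.update_of_ne hjc]
          exact hg j hj'
      · intro j k hj hk hjk
        by_cases hjc : j = jm
        · have hkc : k ≠ jm := fun hc => hjk (hjc.trans hc.symm)
          have hk' : (k:ℕ) < m := by
            have := hne_val k hkc
            omega
          rw [hjc, Function.update_self, Function.update_of_ne hkc]
          exact (hnew_orth k hk').1
        · have hj' : (j:ℕ) < m := by
            have := hne_val j hjc
            omega
          rw [Function.update_of_ne hjc]
          by_cases hkc : k = jm
          · rw [hkc, Function.update_self]
            exact (hnew_orth j hj').2
          · have hk' : (k:ℕ) < m := by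
              have := hne_val k hkc
              omega
            rw [Function.update_of_ne hkc]
            exact horth j k hj' hk' hjk
  obtain ⟨g, hg, horth⟩ := keyG p le_rfl
  refine ⟨g, fun j => ⟨(hg j j.isLt).1, (hg j j.isLt).2.1, ?_⟩, fun j k hjk => horth j k j.isLt k.isLt hjk⟩
  calc N (g j - e j j) ≤ 4 * 9^(j:ℕ) * ε := (hg j j.isLt).2.2
    _ ≤ 4 * 9^p * ε := by
        have h9 : (9:ℝ)^(j:ℕ) ≤ 9^p := pow_le_pow_right₀ (by norm_num) (le_of_lt j.isLt)
        nlinarith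



theorem exists_matrix_units
    {p : ℕ} (hp : 0 < p) {K : Type} [Field K] [Algebra K B]
    {N : B → ℝ} (hN : IsPseudoRankFunction N)
    {A : Subalgebra K B} (hreg : ∀ x ∈ A, ∃ y ∈ A, x = x * y * x)
    {ε : ℝ} (hε : 0 < ε)
    (e : Fin p → Fin p → B)
    (he : ∀ i j k l : Fin p, e i j * e k l = if j = k then e i l else 0)
    (ha : ∀ i j, ∃ a ∈ A, N (e i j - a) < ε) :
    ∃ F : Fin p → Fin p → B, (∀ i j, F i j ∈ A) ∧
      (∀ i j k l, F i j * F k l = if j = k then F i l else 0) ∧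
      (∀ i j, N (e i j - F i j) ≤ 8 * 117 ^ p * ε) := by
  have he_same : ∀ i j l : Fin p, e i j * e j l = e i l := by
    intro i j l; have := he i j j l; simpa using this
  have he_ne : ∀ i j k l : Fin p, j ≠ k → e i j * e k l = 0 := by
    intro i j k l hjk; have := he i j k l; simpa [hjk] using this
  have heidem : ∀ i : Fin p, IsIdempotentElem (e i i) := fun i => he_same i i i
  obtain ⟨g, hg, hgorth⟩ := exists_orth_idem hN hreg hε e he ha
  set z0 : Fin p := ⟨0, hp⟩ with hz0_def
  set ν := N (e z0 z0) with hν_def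
  have hrank : ∀ i j, N (e i j) = ν := by
    intro i j
    apply le_antisymm
    · calc N (e i j) = N ((e i z0 * e z0 z0) * e z0 j) := by rw [he_same, he_same]
        _ ≤ N (e i z0 * e z0 z0) := hN.mul_le_left _ _
        _ ≤ N (e z0 z0) := hN.mul_le_right _ _
    · calc ν = N ((e z0 i * e i j) * e j z0) := by rw [he_same, he_same]
        _ ≤ N (e z0 i * e i j) := hN.mul_le_left _ _
        _ ≤ N (e i j) := hN.mul_le_right _ _
  set M := 4 * (9:ℝ)^p * ε with hM_def
  have h9p : (1:ℝ) ≤ 9^p := one_le_pow₀ (by norm_num)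
  have hM_pos : 0 < M := by rw [hM_def]; nlinarith
  have hεM : ε ≤ M := by rw [hM_def]; nlinarith
  have keyF : ∀ m, 1 ≤ m → m ≤ p → ∃ (f : B) (c d : Fin p → B),
      f ∈ A ∧ IsIdempotentElem f ∧ f * g z0 = f ∧ g z0 * f = f ∧
      N (f - e z0 z0) ≤ (13:ℝ)^m * M ∧
      ∀ j : Fin p, (j:ℕ) < m →
        c j ∈ A ∧ d j ∈ A ∧ g j * c j = c j ∧ c j * f = c j ∧ f * d j = d j ∧
        d j * g j = d j ∧ d j * c j = f ∧
        N (c j - e j z0) ≤ (13:ℝ)^m * M ∧ N (d j - e z0 j) ≤ (13:ℝ)^m * M := by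
    intro m hm
    induction m, hm using Nat.le_induction with
    | base =>
      intro _
      have hgz := hg z0
      refine ⟨g z0, fun _ => g z0, fun _ => g z0, hgz.1, hgz.2.1, hgz.2.1, hgz.2.1, ?_, ?_⟩
      · calc N (g z0 - e z0 z0) ≤ M := hgz.2.2
          _ ≤ (13:ℝ)^1 * M := by nlinarith
      · intro j hj
        have hjz : j = z0 := by
          apply Fin.ext
          have h0 : (z0:ℕ) = 0 := rfl
          omega
        rw [hjz]
        refine ⟨hgz.1, hgz.1, hgz.2.1, hgz.2.1, hgz.2.1, hgz.2.1, hgz.2.1, ?_, ?_⟩ <;>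
        · calc N (g z0 - e z0 z0) ≤ M := hgz.2.2
            _ ≤ (13:ℝ)^1 * M := by nlinarith
    | succ m hm ih =>
      intro hm1p
      obtain ⟨f, c, d, hfA, hfI, hfg, hgf, hfN, hjs⟩ := ih (by omega)
      have hmp : m < p := by omega
      set jm : Fin p := ⟨m, hmp⟩ with hjm_def
      set Γ := (13:ℝ)^m * M with hΓ_def
      have h13 : (1:ℝ) ≤ 13^m := one_le_pow₀ (by norm_num)
      have hΓpos : 0 < Γ := by rw [hΓ_def]; nlinarith
      have hMΓ : M ≤ Γ := by rw [hΓ_def]; nlinarith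
      obtain ⟨a, haA, hae⟩ := ha jm z0
      have hgjm := hg jm
      set b := g jm * a * f with hb_def
      have hbA : b ∈ A := A.mul_mem (A.mul_mem hgjm.1 haA) hfA
      have hgb : g jm * b = b := by
        have e1 : g jm * (g jm * a * f) = ((g jm * g jm) * a) * f := by noncomm_ring
        rw [hb_def, e1, hgjm.2.1]
      have hbf : b * f = b := by
        have e1 : (g jm * a * f) * f = (g jm * a) * (f * f) := by noncomm_ring
        rw [hb_def, e1, hfI]
      set ζ := M + ε + Γ with hζ_def
      have hbe : N (b - e jm z0) ≤ ζ := by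
        have hred : (e jm jm * e jm z0) * e z0 z0 = e jm z0 := by
          rw [he_same, he_same]
        have expand : (g jm - e jm jm) * (a * f) + e jm jm * ((a - e jm z0) * f)
            + (e jm jm * e jm z0) * (f - e z0 z0)
            = g jm * a * f - (e jm jm * e jm z0) * e z0 z0 := by noncomm_ring
        have hdecomp : b - e jm z0 = (g jm - e jm jm) * (a * f)
            + e jm jm * ((a - e jm z0) * f) + (e jm jm * e jm z0) * (f - e z0 z0) := by
          rw [expand, hred, hb_def]
        rw [hdecomp]
        have h1 := hN.subadditive ((g jm - e jm jm) * (a * f) + e jm jm * ((a - e jm z0) * f))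
          ((e jm jm * e jm z0) * (f - e z0 z0))
        have h2 := hN.subadditive ((g jm - e jm jm) * (a * f)) (e jm jm * ((a - e jm z0) * f))
        have h3 : N ((g jm - e jm jm) * (a * f)) ≤ M := by
          calc N ((g jm - e jm jm) * (a * f)) ≤ N (g jm - e jm jm) := hN.mul_le_left _ _
            _ ≤ M := hgjm.2.2
        have h4 : N (e jm jm * ((a - e jm z0) * f)) ≤ ε := by
          calc N (e jm jm * ((a - e jm z0) * f)) ≤ N ((a - e jm z0) * f) := hN.mul_le_right _ _
            _ ≤ N (a - e jm z0) := hN.mul_le_left _ _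
            _ ≤ ε := le_of_lt (by rw [N_sub_symm hN]; exact hae)
        have h5 : N ((e jm jm * e jm z0) * (f - e z0 z0)) ≤ Γ := by
          calc N ((e jm jm * e jm z0) * (f - e z0 z0)) ≤ N (f - e z0 z0) := hN.mul_le_right _ _
            _ ≤ Γ := hfN
        rw [hζ_def]; linarith
      obtain ⟨y, hyA, hbyb⟩ := hreg b hbA
      set s0 := f * y * g jm with hs0_def
      have hbs0b : b * s0 * b = b := by
        have e1 : b * (f * y * g jm) * b = (b * f) * y * (g jm * b) := by noncomm_ring
        rw [hs0_def, e1, hbf, hgb, ← hbyb]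
      set t := s0 * b * s0 with ht_def
      have htA : t ∈ A := by
        have hs0A : s0 ∈ A := A.mul_mem (A.mul_mem hfA hyA) hgjm.1
        exact A.mul_mem (A.mul_mem hs0A hbA) hs0A
      have hbtb : b * t * b = b := by
        have e1 : b * (s0 * b * s0) * b = (b * s0 * b) * s0 * b := by noncomm_ring
        rw [ht_def, e1, hbs0b, hbs0b]
      have htbt : t * b * t = t := by
        have e1 : (s0 * b * s0) * b * (s0 * b * s0)
            = s0 * ((b * s0 * b) * s0 * b) * s0 := by noncomm_ring
        rw [ht_def, e1, hbs0b, hbs0b]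
      have hfs0 : f * s0 = s0 := by
        have e1 : f * (f * y * g jm) = ((f * f) * y) * g jm := by noncomm_ring
        rw [hs0_def, e1, hfI]
      have hs0g : s0 * g jm = s0 := by
        have e1 : (f * y * g jm) * g jm = (f * y) * (g jm * g jm) := by noncomm_ring
        rw [hs0_def, e1, hgjm.2.1]
      have hft : f * t = t := by
        have e1 : f * (s0 * b * s0) = (f * s0) * b * s0 := by noncomm_ring
        rw [ht_def, e1, hfs0]
      have htg : t * g jm = t := by
        have e1 : (s0 * b * s0) * g jm = s0 * b * (s0 * g jm) := by noncomm_ring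
        rw [ht_def, e1, hs0g]
      set f' := t * b with hf'_def
      have hf'A : f' ∈ A := A.mul_mem htA hbA
      have hf'I : IsIdempotentElem f' := by
        unfold IsIdempotentElem
        have e1 : (t * b) * (t * b) = (t * b * t) * b := by noncomm_ring
        rw [hf'_def, e1, htbt]
      have hff' : f * f' = f' := by
        have e1 : f * (t * b) = (f * t) * b := by noncomm_ring
        rw [hf'_def, e1, hft]
      have hf'f : f' * f = f' := by
        have e1 : (t * b) * f = t * (b * f) := by noncomm_ring
        rw [hf'_def, e1, hbf]
      have hbf' : b * f' = b := by
        have e1 : b * (t * b) = b * t * b := by noncomm_ring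
        rw [hf'_def, e1, hbtb]
      set p' := b * t with hp'_def
      have hp'I : IsIdempotentElem p' := by
        unfold IsIdempotentElem
        have e1 : (b * t) * (b * t) = (b * t * b) * t := by noncomm_ring
        rw [hp'_def, e1, hbtb]
      have hgp' : g jm * p' = p' := by
        have e1 : g jm * (b * t) = (g jm * b) * t := by noncomm_ring
        rw [hp'_def, e1, hgb]
      have hp'g : p' * g jm = p' := by
        have e1 : (b * t) * g jm = b * (t * g jm) := by noncomm_ring
        rw [hp'_def, e1, htg]
      have htp' : t * p' = t := by
        have e1 : t * (b * t) = t * b * t := by noncomm_ring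
        rw [hp'_def, e1, htbt]
      -- rank identities
      have hNf' : N f' = N b := by
        apply le_antisymm
        · exact hN.mul_le_right _ _
        · calc N b = N (b * f') := by rw [hbf']
            _ ≤ N f' := hN.mul_le_right _ _
      have hNp' : N p' = N b := by
        apply le_antisymm
        · exact hN.mul_le_left _ _
        · calc N b = N ((b * t) * b) := by rw [hbtb]
            _ ≤ N (b * t) := hN.mul_le_left _ _
      have hNb_lb : ν - ζ ≤ N b := by
        have h1 : N (e jm z0) ≤ N (e jm z0 - b) + N b := N_le_add hN _ _
        have h2 : N (e jm z0 - b) = N (b - e jm z0) := N_sub_symm hN _ _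
        have h3 := hrank jm z0
        linarith [hbe]
      have hNf_ub : N f ≤ ν + Γ := by
        have h1 : N f ≤ N (f - e z0 z0) + N (e z0 z0) := N_le_add hN _ _
        linarith [hfN]
      have hNff' : N (f - f') ≤ Γ + ζ := by
        have h1 : N (f - f') = N f - N f' := N_idem_sub hN hfI hf'I hff' hf'f
        rw [h1, hNf']
        linarith
      have hNgjm_ub : N (g jm) ≤ ν + M := by
        have h1 : N (g jm) ≤ N (g jm - e jm jm) + N (e jm jm) := N_le_add hN _ _
        have h2 := hrank jm jm
        linarith [hgjm.2.2]
      have hNgp'_ub : N (g jm - p') ≤ M + ζ := by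
        have h1 : N (g jm - p') = N (g jm) - N p' := N_idem_sub hN hgjm.2.1 hp'I hgp' hp'g
        rw [h1, hNp']
        linarith
      have hf'N : N (f' - e z0 z0) ≤ 2 * Γ + ζ := by
        have h1 : N (f' - e z0 z0) ≤ N (f' - f) + N (f - e z0 z0) := N_tri hN _ _ _
        have h2 : N (f' - f) = N (f - f') := N_sub_symm hN _ _
        linarith [hfN, hNff']
      -- bound for t
      have htN : N (t - e z0 jm) ≤ 2 * Γ + 3 * ζ + 2 * M := by
        have expand : (f' - e z0 jm * b) * t + e z0 jm * (p' - e jm jm)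
            = t * b * t - e z0 jm * e jm jm := by
          rw [hf'_def, hp'_def]; noncomm_ring
        have hid : t - e z0 jm = (f' - e z0 jm * b) * t + e z0 jm * (p' - e jm jm) := by
          rw [expand, htbt, he_same z0 jm jm]
        rw [hid]
        have h1 := hN.subadditive ((f' - e z0 jm * b) * t) (e z0 jm * (p' - e jm jm))
        have h2 : N ((f' - e z0 jm * b) * t) ≤ 2 * Γ + 2 * ζ := by
          have h3 : N ((f' - e z0 jm * b) * t) ≤ N (f' - e z0 jm * b) := hN.mul_le_left _ _
          have h4 : N (f' - e z0 jm * b) ≤ N (f' - f) + N (f - e z0 jm * b) := N_tri hN _ _ _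
          have h5 : N (f - e z0 jm * b) ≤ N (f - e z0 z0) + N (e z0 z0 - e z0 jm * b) :=
            N_tri hN _ _ _
          have h6 : N (e z0 z0 - e z0 jm * b) ≤ ζ := by
            have hid2 : e z0 z0 - e z0 jm * b = e z0 jm * (e jm z0 - b) := by
              rw [← he_same z0 jm z0]
              noncomm_ring
            rw [hid2]
            calc N (e z0 jm * (e jm z0 - b)) ≤ N (e jm z0 - b) := hN.mul_le_right _ _
              _ = N (b - e jm z0) := N_sub_symm hN _ _
              _ ≤ ζ := hbe
          have h7 : N (f' - f) = N (f - f') := N_sub_symm hN _ _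
          linarith [hfN, hNff']
        have h8 : N (e z0 jm * (p' - e jm jm)) ≤ 2 * M + ζ := by
          have h9 : N (e z0 jm * (p' - e jm jm)) ≤ N (p' - e jm jm) := hN.mul_le_right _ _
          have h10 : N (p' - e jm jm) ≤ N (p' - g jm) + N (g jm - e jm jm) := N_tri hN _ _ _
          have h11 : N (p' - g jm) = N (g jm - p') := N_sub_symm hN _ _
          linarith [hgjm.2.2, hNgp'_ub]
        linarith
      -- numeric facts
      have hnum1 : 2 * Γ + ζ ≤ (13:ℝ)^(m+1) * M := by
        rw [hζ_def, hΓ_def, pow_succ]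
        nlinarith
      have hnum2 : ζ ≤ (13:ℝ)^(m+1) * M := by
        rw [hζ_def, hΓ_def, pow_succ]
        nlinarith
      have hnum3 : 2 * Γ + 3 * ζ + 2 * M ≤ (13:ℝ)^(m+1) * M := by
        rw [hζ_def, hΓ_def, pow_succ]
        nlinarith
      have hnum4 : Γ + (Γ + ζ) ≤ (13:ℝ)^(m+1) * M := by
        rw [hζ_def, hΓ_def, pow_succ]
        nlinarith
      -- assemble
      refine ⟨f', Function.update (fun j => c j * f') jm b,
        Function.update (fun j => f' * d j) jm t, hf'A, hf'I, ?_, ?_, ?_, ?_⟩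
      · -- f' * g z0 = f'
        rw [← hf'f, mul_assoc, hfg, hf'f]
      · -- g z0 * f' = f'
        rw [← hff', ← mul_assoc, hgf]
      · -- N (f' - e z0 z0)
        linarith [hf'N, hnum1]
      · intro j hj
        by_cases hjc : j = jm
        · rw [hjc, Function.update_self, Function.update_self]
          refine ⟨hbA, htA, hgb, hbf', ?_, htg, ?_, ?_, ?_⟩
          · -- f' * t = t
            have e1 : (t * b) * t = t * b * t := by noncomm_ring
            rw [hf'_def, e1, htbt]
          · -- t * b = f'
            rw [hf'_def]
          · linarith [hbe, hnum2]
          · linarith [htN, hnum3]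
        · have hj' : (j:ℕ) < m := by
            have hne : (j:ℕ) ≠ m := fun hc => hjc (Fin.ext hc)
            omega
          rw [Function.update_of_ne hjc, Function.update_of_ne hjc]
          obtain ⟨hcA, hdA, hgc, hcf, hfd, hdg, hdc, hcN, hdN⟩ := hjs j hj'
          refine ⟨A.mul_mem hcA hf'A, A.mul_mem hf'A hdA, ?_, ?_, ?_, ?_, ?_, ?_, ?_⟩
          · rw [← mul_assoc, hgc]
          · rw [mul_assoc, hf'I]
          · rw [← mul_assoc, hf'I]
          · rw [mul_assoc, hdg]
          · have e1 : (f' * d j) * (c j * f') = f' * ((d j * c j) * f') := by noncomm_ring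
            rw [e1, hdc, hff', hf'I]
          · have hdist : c j * f' - c j = c j * (f' - f) := by
              rw [mul_sub, hcf]
            have h1 : N (c j * f' - e j z0) ≤ N (c j * f' - c j) + N (c j - e j z0) :=
              N_tri hN _ _ _
            have h2 : N (c j * f' - c j) ≤ N (f' - f) := by
              rw [hdist]; exact hN.mul_le_right _ _
            have h3 : N (f' - f) = N (f - f') := N_sub_symm hN _ _
            linarith [hNff', hcN, hnum4]
          · have hdist : f' * d j - d j = (f' - f) * d j := by
              rw [sub_mul, hfd]
            have h1 : N (f' * d j - e z0 j) ≤ N (f' * d j - d j) + N (d j - e z0 j) :=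
              N_tri hN _ _ _
            have h2 : N (f' * d j - d j) ≤ N (f' - f) := by
              rw [hdist]; exact hN.mul_le_left _ _
            have h3 : N (f' - f) = N (f - f') := N_sub_symm hN _ _
            linarith [hNff', hdN, hnum4]
  -- use keyF at m = p
  obtain ⟨f, c, d, hfA, hfI, hfg, hgf, hfN, hjs⟩ := keyF p hp le_rfl
  refine ⟨fun i j => c i * d j, ?_, ?_, ?_⟩
  · intro i j
    exact A.mul_mem (hjs i i.isLt).1 (hjs j j.isLt).2.1
  · intro i j k l
    obtain ⟨hcAi, hdAi, hgci, hcfi, hfdi, hdgi, hdci, _, _⟩ := hjs i i.isLt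
    obtain ⟨hcAj, hdAj, hgcj, hcfj, hfdj, hdgj, hdcj, _, _⟩ := hjs j j.isLt
    obtain ⟨hcAk, hdAk, hgck, hcfk, hfdk, hdgk, hdck, _, _⟩ := hjs k k.isLt
    obtain ⟨hcAl, hdAl, hgcl, hcfl, hfdl, hdgl, hdcl, _, _⟩ := hjs l l.isLt
    by_cases hjk : j = k
    · subst hjk
      rw [if_pos rfl]
      have e1 : (c i * d j) * (c j * d l) = c i * ((d j * c j) * d l) := by noncomm_ring
      rw [e1, hdcj, hfdl]
    · rw [if_neg hjk]
      have hz : d j * c k = 0 := by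
        calc d j * c k = (d j * g j) * (g k * c k) := by rw [hdgj, hgck]
          _ = d j * ((g j * g k) * c k) := by noncomm_ring
          _ = 0 := by rw [hgorth j k hjk, zero_mul, mul_zero]
      have e1 : (c i * d j) * (c k * d l) = c i * ((d j * c k) * d l) := by noncomm_ring
      rw [e1, hz, zero_mul, mul_zero]
  · intro i j
    obtain ⟨_, _, _, _, _, _, _, hcNi, _⟩ := hjs i i.isLt
    obtain ⟨_, _, _, _, _, _, _, _, hdNj⟩ := hjs j j.isLt
    have hid : e i j - c i * d j = (e i z0 - c i) * e z0 j + c i * (e z0 j - d j) := by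
      rw [← he_same i z0 j]
      noncomm_ring
    rw [hid]
    have h1 := hN.subadditive ((e i z0 - c i) * e z0 j) (c i * (e z0 j - d j))
    have h2 : N ((e i z0 - c i) * e z0 j) ≤ N (e i z0 - c i) := hN.mul_le_left _ _
    have h3 : N (e i z0 - c i) = N (c i - e i z0) := N_sub_symm hN _ _
    have h4 : N (c i * (e z0 j - d j)) ≤ N (e z0 j - d j) := hN.mul_le_right _ _
    have h5 : N (e z0 j - d j) = N (d j - e z0 j) := N_sub_symm hN _ _
    have hpow : (13:ℝ)^p * M + (13:ℝ)^p * M = 8 * 117^p * ε := by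
      rw [hM_def]
      have : (13:ℝ)^p * 9^p = 117^p := by
        rw [← mul_pow]; norm_num
      nlinarith [this]
    linarith [hpow ▸ (by linarith [h1, h2, h4, hcNi, hdNj] :
      N ((e i z0 - c i) * e z0 j + c i * (e z0 j - d j)) ≤ (13:ℝ)^p * M + (13:ℝ)^p * M)]



end AuxiliaryProofs


/-- The matrix-unit approximation property for a constant `c` and a size `p`: matrix units of
`M_p(K)` that are almost contained in a regular subalgebra `A` (up to `ε` in rank) can be
realized exactly inside `A`, moving each of them by at most `c * ε`. -/
def MatrixUnitApproxProperty (c : ℝ) (p : ℕ) : Prop :=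
  ∀ (K : Type) [Field K] (B : Type) [Ring B] [Algebra K B] (N : B → ℝ)
    (A : Subalgebra K B),
    IsPseudoRankFunction N →
    (∀ x ∈ A, ∃ y ∈ A, x = x * y * x) →
    ∀ ε : ℝ, 0 < ε →
      ∀ ρ : Matrix (Fin p) (Fin p) K →ₙₐ[K] B,
        (∀ i j : Fin p, ∃ a ∈ A, N (ρ (Matrix.single i j 1) - a) < ε) →
          ∃ ψ : Matrix (Fin p) (Fin p) K →ₙₐ[K] A,
            ∀ i j : Fin p,
              N (ρ (Matrix.single i j 1)
                - (ψ (Matrix.single i j 1) : B)) < c * ε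

/-- **Lemma 2.4** (Ara–Claramunt). For every positive integer `p` there is a constant `K(p)`,
depending only on `p`, with the matrix-unit approximation property. -/
theorem statement1 (p : ℕ) (hp : 0 < p) :
    ∃ c : ℝ, 0 < c ∧ MatrixUnitApproxProperty c p := by
  refine ⟨8 * 117 ^ p + 1, by positivity, ?_⟩
  intro K _ B _ _ N A hN hreg ε hε ρ happrox
  classical
  set e : Fin p → Fin p → B := fun i j => ρ (Matrix.single i j 1) with he_def
  have he : ∀ i j k l : Fin p, e i j * e k l = if j = k then e i l else 0 := by
    intro i j k l
    by_cases hjk : j = k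
    · subst hjk
      rw [if_pos rfl]
      show ρ _ * ρ _ = ρ _
      rw [← map_mul, Matrix.single_mul_single_same, one_mul]
    · rw [if_neg hjk]
      show ρ _ * ρ _ = 0
      rw [← map_mul, Matrix.single_mul_single_of_ne (h := hjk), map_zero]
  obtain ⟨F, hFA, hFmul, hFN⟩ := exists_matrix_units hp hN hreg hε e he happrox
  set FA : Fin p → Fin p → A := fun i j => ⟨F i j, hFA i j⟩ with hFA_def
  have hFAmul : ∀ i j k l, FA i j * FA k l = if j = k then FA i l else 0 := by
    intro i j k l
    apply Subtype.ext
    show (F i j * F k l : B) = _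
    rw [hFmul]
    split <;> rfl
  set ψfun : Matrix (Fin p) (Fin p) K → A := fun x => ∑ i, ∑ j, x i j • FA i j with hψfun_def
  have hψmul : ∀ x y, ψfun (x * y) = ψfun x * ψfun y := by
    intro x y
    rw [hψfun_def]
    simp only []
    calc (∑ i, ∑ j, (x * y) i j • FA i j)
        = ∑ i, ∑ j, ∑ k, (x i k * y k j) • FA i j := by
          refine Finset.sum_congr rfl fun i _ => Finset.sum_congr rfl fun j _ => ?_
          rw [Matrix.mul_apply, Finset.sum_smul]
      _ = ∑ i, ∑ k, ∑ j, (x i k * y k j) • FA i j := by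
          refine Finset.sum_congr rfl fun i _ => ?_
          exact Finset.sum_comm
      _ = ∑ i, ∑ k, ∑ m, ∑ j, (x i k * y m j) • (FA i k * FA m j) := by
          refine Finset.sum_congr rfl fun i _ => Finset.sum_congr rfl fun k _ => ?_
          rw [Finset.sum_comm]
          refine Finset.sum_congr rfl fun j _ => ?_
          rw [Finset.sum_eq_single k]
          · rw [hFAmul, if_pos rfl]
          · intro m _ hmk
            rw [hFAmul, if_neg (fun h => hmk h.symm), smul_zero]
          · intro h
            exact absurd (Finset.mem_univ k) h
      _ = (∑ i, ∑ j, x i j • FA i j) * (∑ i, ∑ j, y i j • FA i j) := by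
          rw [Finset.sum_mul]
          refine Finset.sum_congr rfl fun i _ => ?_
          rw [Finset.sum_mul]
          refine Finset.sum_congr rfl fun k _ => ?_
          rw [Finset.mul_sum]
          refine Finset.sum_congr rfl fun m _ => ?_
          rw [Finset.mul_sum]
          refine Finset.sum_congr rfl fun j _ => ?_
          rw [smul_mul_smul_comm]
  set ψ : Matrix (Fin p) (Fin p) K →ₙₐ[K] A :=
    { toFun := ψfun
      map_smul' := by
        intro cc x
        simp only [hψfun_def]
        simp only [Matrix.smul_apply, smul_eq_mul, MonoidHom.id_apply, Finset.smul_sum, mul_smul]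
      map_zero' := by
        simp only [hψfun_def]
        simp
      map_add' := by
        intro x y
        simp only [hψfun_def]
        simp only [Matrix.add_apply, add_smul, Finset.sum_add_distrib]
      map_mul' := hψmul } with hψ_def
  have hψval : ∀ i j, ψ (Matrix.single i j 1) = FA i j := by
    intro i j
    show (∑ k, ∑ l, (Matrix.single i j 1 : Matrix (Fin p) (Fin p) K) k l • FA k l)
        = FA i j
    have h1 : ∀ k, (∑ l, (Matrix.single i j 1 : Matrix (Fin p) (Fin p) K) k l • FA k l)
        = if i = k then FA k j else 0 := by
      intro k
      by_cases hik : i = k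
      · rw [if_pos hik]
        have h2 : ∀ l, (Matrix.single i j 1 : Matrix (Fin p) (Fin p) K) k l • FA k l
            = if j = l then FA k l else 0 := by
          intro l
          show (if i = k ∧ j = l then (1:K) else 0) • FA k l = _
          by_cases hjl : j = l
          · rw [if_pos ⟨hik, hjl⟩, if_pos hjl, one_smul]
          · rw [if_neg (fun h => hjl h.2), if_neg hjl, zero_smul]
        rw [Finset.sum_congr rfl fun l _ => h2 l, Finset.sum_ite_eq]
        simp
      · have h2 : ∀ l, (Matrix.single i j 1 : Matrix (Fin p) (Fin p) K) k l • FA k l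
            = 0 := by
          intro l
          show (if i = k ∧ j = l then (1:K) else 0) • FA k l = 0
          rw [if_neg (fun h => hik h.1), zero_smul]
        rw [Finset.sum_congr rfl fun l _ => h2 l, Finset.sum_const_zero, if_neg hik]
    rw [Finset.sum_congr rfl fun k _ => h1 k, Finset.sum_ite_eq]
    simp
  refine ⟨ψ, fun i j => ?_⟩
  have hv : ((ψ (Matrix.single i j 1)) : B) = F i j := by rw [hψval]
  rw [hv]
  calc N (ρ (Matrix.single i j 1) - F i j) ≤ 8 * 117 ^ p * ε := hFN i j
    _ < (8 * 117 ^ p + 1) * ε := by nlinarith [pow_pos (by norm_num : (0:ℝ) < 117) p]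



end AraClaramunt
end
end

section
/- Let B be a unital ring equipped with a pseudo-rank function N, let A be a unital von Neumann regular subring of B, let e in B be an idempotent, and let x in A satisfy N(e - x) < eps. Then there exists an idempotent g in A with N(e - g) < 4*eps. -/
open scoped TensorProduct Kronecker

noncomputable section

namespace AraClaramunt

/-- The base case `p = 1`, `K(1) = 4`, of the matrix-unit approximation lemma: an idempotent of
`B` which is within `ε` (in rank) of an element of a unital von Neumann regular subring `A` is
within `4 ε` of an idempotent of `A`. -/
theorem statement2 (B : Type) [Ring B] (N : B → ℝ) (hN : IsPseudoRankFunction N)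
    (A : Subring B) (hA : ∀ x ∈ A, ∃ y ∈ A, x = x * y * x)
    (e : B) (he : IsIdempotentElem e) (x : B) (hx : x ∈ A)
    (ε : ℝ) (hex : N (e - x) < ε) :
    ∃ g ∈ A, IsIdempotentElem g ∧ N (e - g) < 4 * ε := by
  obtain ⟨y, hy, hxyx⟩ := hA x hx
  have h1 : x * y * x = x := hxyx.symm
  have hee : e * e = e := he
  refine ⟨x * (1 + y - x * y), A.mul_mem hx (A.sub_mem (A.add_mem A.one_mem hy)
    (A.mul_mem hx hy)), ?_, ?_⟩
  · -- idempotency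
    have hfact : 1 - x * (1 + y - x * y) = (1 - x) * (1 - x * y) := by noncomm_ring
    have hvu : (1 - x*y) * (1 - x) = 1 - x*y := by
      have : (1 - x*y) * (1 - x) = 1 - x - x*y + x*y*x := by noncomm_ring
      rw [this, h1]; noncomm_ring
    have hvv : (1 - x*y) * (1 - x*y) = 1 - x*y := by
      have : (1 - x*y) * (1 - x*y) = 1 - x*y - x*y + x*y*x*y := by noncomm_ring
      rw [this, h1]; noncomm_ring
    have hsub : IsIdempotentElem (1 - x * (1 + y - x * y)) := by
      show (1 - x * (1 + y - x * y)) * (1 - x * (1 + y - x * y)) = 1 - x * (1 + y - x * y)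
      rw [hfact]
      calc (1 - x) * (1 - x*y) * ((1 - x) * (1 - x*y))
          = (1 - x) * ((1 - x*y) * (1 - x) * (1 - x*y)) := by noncomm_ring
        _ = (1 - x) * (1 - x*y) := by rw [hvu, hvv]
    have := hsub.one_sub
    rwa [sub_sub_cancel] at this
  · -- rank estimate
    set g : B := x * (1 + y - x * y) with hg
    have hεpos : 0 < ε := lt_of_le_of_lt (hN.nonneg _) hex
    have hfact : 1 - g = (1 - x) * (1 - x * y) := by rw [hg]; noncomm_ring
    -- N (e * (1 - g)) ≤ N (e - x)
    have hterm1 : N (e * (1 - g)) ≤ N (e - x) := by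
      have heq : e * (1 - g) = (e * (e - x)) * (1 - x * y) := by
        rw [hfact]
        have : e * (e - x) = e * (1 - x) := by
          rw [mul_sub, mul_sub, hee, mul_one]
        rw [this, mul_assoc]
      rw [heq]
      exact le_trans (hN.mul_le_left _ _) (hN.mul_le_right _ _)
    -- N ((1 - e) * g) ≤ N (e - x)
    have hterm2 : N ((1 - e) * g) ≤ N (e - x) := by
      have heq : (1 - e) * g = ((1 - e) * ((-1) * (e - x))) * (1 + y - x * y) := by
        rw [hg]
        have key : (1 - e) * ((-1) * (e - x)) = (1 - e) * x := by
          have expand : (1 - e) * ((-1) * (e - x)) = x - e * x - e + e * e := by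
            noncomm_ring
          rw [expand, hee]; noncomm_ring
        rw [key, mul_assoc]
      rw [heq]
      exact le_trans (hN.mul_le_left _ _)
        (le_trans (hN.mul_le_right _ _) (hN.mul_le_right _ _))
    have hdecomp : e - g = e * (1 - g) + (-1) * ((1 - e) * g) := by noncomm_ring
    have hbound : N (e - g) ≤ N (e - x) + N (e - x) := by
      calc N (e - g) = N (e * (1 - g) + (-1) * ((1 - e) * g)) := by rw [hdecomp]
        _ ≤ N (e * (1 - g)) + N ((-1) * ((1 - e) * g)) := hN.subadditive _ _
        _ ≤ N (e * (1 - g)) + N ((1 - e) * g) := by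
            exact add_le_add_right (hN.mul_le_right _ _) _
        _ ≤ N (e - x) + N (e - x) := add_le_add hterm1 hterm2
    have : N (e - g) < ε + ε := lt_of_le_of_lt hbound (by linarith)
    linarith

end AraClaramunt
end
end

section
/- Let N be a pseudo-rank function on a *-regular ring R. Then the involution is isometric for N, that is, N(r*) = N(r) for every r in R. -/
open scoped TensorProduct Kronecker

noncomputable section

namespace AraClaramunt

/-! ### Star notions -/

/-- Properness of an involution: `x* x = 0` implies `x = 0`. -/
def ProperStar (R : Type*) [NonUnitalNonAssocRing R] [Star R] : Prop :=
  ∀ x : R, star x * x = 0 → x = 0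

/-- A projection: a self-adjoint idempotent. -/
def IsProjection {R : Type*} [Mul R] [Star R] (p : R) : Prop :=
  star p = p ∧ p * p = p

/-- The order on projections: `q ≤ p` iff `p q = q p = q`. -/
def ProjLE {R : Type*} [Mul R] (q p : R) : Prop :=
  p * q = q ∧ q * p = q

/-- `*`-equivalence of projections: `e = w w*` and `f = w* w` for some `w`. -/
def StarEquivProj {R : Type*} [Mul R] [Star R] (e f : R) : Prop :=
  ∃ w : R, e = w * star w ∧ f = star w * w

/-- Equivalence of projections: `e = x y`, `f = y x` with `x ∈ eRf`, `y ∈ fRe`. -/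
def EquivProj {R : Type*} [Mul R] (e f : R) : Prop :=
  ∃ x y : R, x = e * x * f ∧ y = f * y * e ∧ e = x * y ∧ f = y * x

/-- `y` is the relative inverse of `x` in a `*`-regular ring. -/
def IsRelativeInverse {R : Type*} [Mul R] [Star R] (x y : R) : Prop :=
  x * y * x = x ∧ y * x * y = y ∧ star (x * y) = x * y ∧ star (y * x) = y * x

/-- `e = LP(x)`: `e` is a projection with `x R = e R`. -/
def IsLeftProjOf {R : Type*} [Mul R] [Star R] (x e : R) : Prop :=
  IsProjection e ∧ e * x = x ∧ ∃ y : R, e = x * y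

/-- `f = RP(x)`: `f` is a projection with `R x = R f`. -/
def IsRightProjOf {R : Type*} [Mul R] [Star R] (x f : R) : Prop :=
  IsProjection f ∧ x * f = x ∧ ∃ y : R, f = y * x

/-- Positive definiteness of the involution of a field. -/
def PosDefStar (F : Type*) [Field F] [StarRing F] : Prop :=
  ∀ (n : ℕ) (x : Fin n → F), (∑ i, star (x i) * x i) = 0 → ∀ i, x i = 0

/-- `*`-Pythagorean field. -/
def StarPythagorean (F : Type*) [Field F] [StarRing F] : Prop :=
  ∀ x y : F, ∃ z : F, x * star x + y * star y = z * star z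

/-- A standard matricial `*`-algebra over `(F, *)`: a `*`-algebra `*`-isomorphic to a finite
product of matrix algebras `M_{n i}(F)` with the `*`-transpose involution. -/
def IsStandardMatricialStarAlgebra (F : Type*) [Field F] [StarRing F]
    (A : Type*) [Ring A] [Algebra F A] [StarRing A] [StarModule F A] : Prop :=
  ∃ (k : ℕ) (n : Fin (k + 1) → ℕ), (∀ i, 0 < n i) ∧
    Nonempty (A ≃⋆ₐ[F] ((i : Fin (k + 1)) → Matrix (Fin (n i)) (Fin (n i)) F))

/-- A map `M_a(F) → M_b(F)` is standard (up to a permutation of the index set) if it is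
`z ↦ diag(z, …, z)` (multiplicity `t`), suitably reindexed. -/
def IsStandardMatrixMap (F : Type*) [Field F] {a b : ℕ}
    (Φ : Matrix (Fin a) (Fin a) F → Matrix (Fin b) (Fin b) F) : Prop :=
  ∃ (t : ℕ) (E : Fin a × Fin t ≃ Fin b),
    ∀ z, Φ z = Matrix.reindex E E (Matrix.blockDiagonal fun _ : Fin t => z)

/-- A map between finite products of matrix algebras over `F` is standard (block diagonal,
up to a permutation of the index sets): it is determined by multiplicities `t j i`, the `j`-th
component being the block-diagonal sum of `t j i` copies of the `i`-th component of the input. -/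
def IsStandardBlockMap (F : Type*) [Field F] {k l : ℕ} (n : Fin (k + 1) → ℕ)
    (m : Fin (l + 1) → ℕ)
    (Φ : ((i : Fin (k + 1)) → Matrix (Fin (n i)) (Fin (n i)) F) →
      ((j : Fin (l + 1)) → Matrix (Fin (m j)) (Fin (m j)) F)) : Prop :=
  ∃ t : Fin (l + 1) → Fin (k + 1) → ℕ,
    ∃ E : (j : Fin (l + 1)) →
      ((Σ c : (Σ i : Fin (k + 1), Fin (t j i)), Fin (n c.1)) ≃ Fin (m j)),
      ∀ z j, Φ z j =
        Matrix.reindex (E j) (E j)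
          (Matrix.blockDiagonal' fun c : (Σ i : Fin (k + 1), Fin (t j i)) => z c.1)

end AraClaramunt
namespace AraClaramunt

/-- **Lemma 4.3(a)** (Ara–Claramunt). Any pseudo-rank function on a `*`-regular ring is
isometric for the involution. -/
theorem statement7 (R : Type) [Ring R] [StarRing R]
    (hreg : VNRegular R) (hproper : ProperStar R)
    (N : R → ℝ) (hN : IsPseudoRankFunction N) :
    ∀ r : R, N (star r) = N r := by
  have key : ∀ r : R, N (star r) ≤ N r := by
    intro r
    obtain ⟨y, hy⟩ := hreg (star r * r)
    set s : R := star r * r with hs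
    -- properness forces r = r * y * s
    have hzero : star (r - r * y * s) * (r - r * y * s) = 0 := by
      have hss : star s = s := by simp [hs, star_mul, mul_assoc]
      have h1 : s * y * s = s := hy.symm
      calc star (r - r * y * s) * (r - r * y * s)
          = s - s * y * s - s * star y * s + s * star y * (s * y * s) := by
            simp [star_sub, star_mul, hss, sub_mul, mul_sub, hs]
            noncomm_ring
        _ = 0 := by rw [h1]; abel
    have hr : r = r * y * s := sub_eq_zero.mp (hproper _ hzero)
    have hstar : star r = s * (star y * star r) := by
      conv_lhs => rw [hr]
      have hss : star s = s := by simp [hs, star_mul, mul_assoc]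
      simp [star_mul, hss, mul_assoc]
    calc N (star r) = N (s * (star y * star r)) := by rw [← hstar]
      _ ≤ N s := hN.mul_le_left _ _
      _ = N (star r * r) := rfl
      _ ≤ N r := hN.mul_le_right _ _
  intro r
  have h1 := key r
  have h2 := key (star r)
  rw [star_star] at h2
  linarith

end AraClaramunt
end
end

section
/- Let N be a pseudo-rank function on a *-regular ring R. Then N(rbar - sbar) <= 3 N(r - s) for all r, s in R, where rbar denotes the relative inverse of r. -/
open scoped TensorProduct Kronecker

noncomputable section

namespace AraClaramunt

/-- **Lemma 4.3(b)** (Ara–Claramunt). For a pseudo-rank function `N` on a `*`-regular ring,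
`N (r̄ - s̄) ≤ 3 N (r - s)`, where `r̄` denotes the relative inverse. -/
theorem statement8 (R : Type) [Ring R] [StarRing R]
    (hreg : VNRegular R) (hproper : ProperStar R)
    (N : R → ℝ) (hN : IsPseudoRankFunction N)
    (r s rbar sbar : R)
    (hr : IsRelativeInverse r rbar) (hs : IsRelativeInverse s sbar) :
    N (rbar - sbar) ≤ 3 * N (r - s) := by
  -- Step 1: `N (star x) ≤ N x` for all `x`.
  have hstar_le : ∀ x : R, N (star x) ≤ N x := by
    intro x
    obtain ⟨y, hy⟩ := hreg (x * star x)
    have hkey : star x * y * x * star x = star x := by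
      have h1 : x * star x * y * (x * star x) - x * star x = 0 := by
        rw [← hy, sub_self]
      have h0 : star (star x * y * x * star x - star x) * (star x * y * x * star x - star x)
          = (x * star x * star y - 1) * (x * star x * y * (x * star x) - x * star x) := by
        simp only [star_sub, star_mul, star_star]
        noncomm_ring
      rw [h1, mul_zero] at h0
      have := hproper _ h0
      exact sub_eq_zero.mp this
    calc N (star x) = N ((star x * y * x) * star x) := by
          rw [show (star x * y * x) * star x = star x from hkey]
      _ ≤ N (star x * y * x) := hN.mul_le_left _ _
      _ ≤ N x := hN.mul_le_right _ _
  have hstar : ∀ x : R, N (star x) = N x := fun x =>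
    le_antisymm (hstar_le x) (by simpa using hstar_le (star x))
  have hneg : ∀ x : R, N (-x) = N x := by
    intro x
    have h1 : N (-x) ≤ N x := by
      have := hN.mul_le_right (-1) x
      simpa using this
    have h2 : N x ≤ N (-x) := by
      have := hN.mul_le_right (-1) (-x)
      simpa using this
    linarith
  have hsr : N (s - r) = N (r - s) := by
    rw [show s - r = -(r - s) from (neg_sub r s).symm, hneg]
  -- The key identity.
  have hid : rbar - sbar =
      sbar * (s - r) * rbar + ((1 - sbar * s) * rbar - sbar * (1 - r * rbar)) := by
    noncomm_ring
  -- Bound the first term.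
  have hb1 : N (sbar * (s - r) * rbar) ≤ N (r - s) := by
    calc N (sbar * (s - r) * rbar) ≤ N (sbar * (s - r)) := hN.mul_le_left _ _
      _ ≤ N (s - r) := hN.mul_le_right _ _
      _ = N (r - s) := hsr
  -- Bound the second term.
  have hb2 : N ((1 - sbar * s) * rbar) ≤ N (r - s) := by
    have e2 : (1 - sbar * s) * rbar = ((1 - sbar * s) * (rbar * r)) * rbar := by
      rw [mul_assoc, mul_assoc]
      rw [show r * rbar = r * rbar from rfl]
      have : rbar * (r * rbar) = rbar := by rw [← mul_assoc]; exact hr.2.1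
      rw [this]
    have hstar2 : star ((1 - sbar * s) * (rbar * r)) = (rbar * r) * (1 - sbar * s) := by
      rw [star_mul, hr.2.2.2, star_sub, star_one, hs.2.2.2]
    have hs0 : s * (1 - sbar * s) = 0 := by
      have : s * (sbar * s) = s := by rw [← mul_assoc]; exact hs.1
      rw [mul_sub, mul_one, this, sub_self]
    have hre : (rbar * r) * (1 - sbar * s) = (rbar * (r - s)) * (1 - sbar * s) := by
      have expand : (rbar * r) * (1 - sbar * s)
          = (rbar * (r - s)) * (1 - sbar * s) + rbar * (s * (1 - sbar * s)) := by
        noncomm_ring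
      rw [hs0, mul_zero, add_zero] at expand
      exact expand
    calc N ((1 - sbar * s) * rbar) = N (((1 - sbar * s) * (rbar * r)) * rbar) := by rw [← e2]
      _ ≤ N ((1 - sbar * s) * (rbar * r)) := hN.mul_le_left _ _
      _ = N (star ((1 - sbar * s) * (rbar * r))) := (hstar _).symm
      _ = N ((rbar * (r - s)) * (1 - sbar * s)) := by rw [hstar2, hre]
      _ ≤ N (rbar * (r - s)) := hN.mul_le_left _ _
      _ ≤ N (r - s) := hN.mul_le_right _ _
  -- Bound the third term.
  have hb3 : N (sbar * (1 - r * rbar)) ≤ N (r - s) := by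
    have e3 : sbar * (1 - r * rbar) = sbar * ((s * sbar) * (1 - r * rbar)) := by
      rw [← mul_assoc, ← mul_assoc, hs.2.1]
    have hstar3 : star ((s * sbar) * (1 - r * rbar)) = (1 - r * rbar) * (s * sbar) := by
      rw [star_mul, hs.2.2.1, star_sub, star_one, hr.2.2.1]
    have hr0 : (1 - r * rbar) * r = 0 := by
      rw [sub_mul, one_mul, hr.1, sub_self]
    have hre : (1 - r * rbar) * (s * sbar) = ((1 - r * rbar) * (s - r)) * sbar := by
      have expand : (1 - r * rbar) * (s * sbar)
          = ((1 - r * rbar) * (s - r)) * sbar + ((1 - r * rbar) * r) * sbar := by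
        noncomm_ring
      rw [hr0, zero_mul, add_zero] at expand
      exact expand
    calc N (sbar * (1 - r * rbar)) = N (sbar * ((s * sbar) * (1 - r * rbar))) := by rw [← e3]
      _ ≤ N ((s * sbar) * (1 - r * rbar)) := hN.mul_le_right _ _
      _ = N (star ((s * sbar) * (1 - r * rbar))) := (hstar _).symm
      _ = N (((1 - r * rbar) * (s - r)) * sbar) := by rw [hstar3, hre]
      _ ≤ N ((1 - r * rbar) * (s - r)) := hN.mul_le_left _ _
      _ ≤ N (s - r) := hN.mul_le_right _ _
      _ = N (r - s) := hsr
  -- Combine.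
  have h23 : N ((1 - sbar * s) * rbar - sbar * (1 - r * rbar))
      ≤ N ((1 - sbar * s) * rbar) + N (sbar * (1 - r * rbar)) := by
    rw [sub_eq_add_neg]
    calc N ((1 - sbar * s) * rbar + -(sbar * (1 - r * rbar)))
        ≤ N ((1 - sbar * s) * rbar) + N (-(sbar * (1 - r * rbar))) := hN.subadditive _ _
      _ = N ((1 - sbar * s) * rbar) + N (sbar * (1 - r * rbar)) := by rw [hneg]
  have htot := hN.subadditive (sbar * (s - r) * rbar)
    ((1 - sbar * s) * rbar - sbar * (1 - r * rbar))
  rw [← hid] at htot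
  linarith

end AraClaramunt
end
end

section
/- Let N be a pseudo-rank function on a *-regular ring R. Then N(LP(r) - LP(s)) <= 4 N(r - s) and N(RP(r) - RP(s)) <= 4 N(r - s) for all r, s in R. -/
open scoped TensorProduct Kronecker

noncomputable section

namespace AraClaramunt

/-- In a `*`-regular ring every element has a left projection. -/
lemma lp_exists {R : Type} [Ring R] [StarRing R]
    (hreg : VNRegular R) (hproper : ProperStar R) (x : R) :
    ∃ e : R, IsLeftProjOf x e := by
  obtain ⟨w, hw⟩ := hreg (star x * x)
  set z : R := star x * x with hz_def
  -- `hw : z = z * w * z`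
  have hzstar : star z = z := by simp [hz_def]
  have hzw'z : z * star w * z = z := by
    have := congrArg star hw
    simp only [star_mul, hzstar, star_star] at this
    rw [← mul_assoc] at this
    exact this.symm
  -- `x = x * w * z`
  have hxwz : x = x * w * z := by
    have hkey : star (x - x * w * z) * (x - x * w * z) = 0 := by
      have expand : star (x - x * w * z) * (x - x * w * z)
          = z - z * w * z - z * star w * z + z * star w * (z * w * z) := by
        simp only [star_sub, star_mul, hzstar, star_star, hz_def]
        noncomm_ring
      rw [expand, ← hw, hzw'z]
      simp [← hw]
    exact sub_eq_zero.mp (hproper _ hkey)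
  set v : R := w * z * star w with hv_def
  have hvstar : star v = v := by
    simp only [hv_def, star_mul, hzstar, star_star, mul_assoc]
  have hvz : v * z = w * z := by
    have h1 : v * z = w * (z * star w * z) := by rw [hv_def]; noncomm_ring
    rw [h1, hzw'z]
  have hvzv : v * z * v = v := by
    rw [hvz, hv_def]
    have h2 : w * z * (w * z * star w) = w * (z * w * z) * star w := by noncomm_ring
    rw [h2, ← hw]
  refine ⟨x * v * star x, ⟨?_, ?_⟩, ?_, ⟨v * star x, (mul_assoc x v (star x)).symm ▸ rfl⟩⟩
  · simp only [star_mul, hvstar, star_star, mul_assoc]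
  · have h3 : x * v * star x * (x * v * star x) = x * (v * z * v) * star x := by
      simp only [hz_def]; noncomm_ring
    rw [h3, hvzv]
  · have h4 : x * v * star x * x = x * (v * z) := by
      simp only [hz_def]; noncomm_ring
    rw [h4, hvz, ← mul_assoc, ← hxwz]

/-- The rank of a left projection equals the rank of the element. -/
lemma rank_lp {R : Type} [Ring R] [StarRing R] {N : R → ℝ}
    (hN : IsPseudoRankFunction N) {x e : R} (h : IsLeftProjOf x e) : N e = N x := by
  obtain ⟨-, hex, y, hey⟩ := h
  refine le_antisymm ?_ ?_
  · rw [hey]; exact hN.mul_le_left x y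
  · conv_lhs => rw [← hex]
    exact hN.mul_le_left e x

/-- Pseudo-rank functions on `*`-regular rings are `*`-invariant. -/
lemma rank_star {R : Type} [Ring R] [StarRing R]
    (hreg : VNRegular R) (hproper : ProperStar R) {N : R → ℝ}
    (hN : IsPseudoRankFunction N) (x : R) : N (star x) = N x := by
  obtain ⟨e, he⟩ := lp_exists hreg hproper (star x)
  obtain ⟨⟨hestar, heidem⟩, hex, y, hey⟩ := he
  have h1 : N e = N (star x) := rank_lp hN ⟨⟨hestar, heidem⟩, hex, y, hey⟩
  -- `e` is a right projection of `x`
  have hxe : x * e = x := by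
    have := congrArg star hex
    simpa [star_mul, hestar] using this
  have h2 : N e = N x := by
    refine le_antisymm ?_ ?_
    · have := congrArg star hey
      simp only [star_mul, hestar, star_star] at this
      rw [this]; exact hN.mul_le_right (star y) x
    · conv_lhs => rw [← hxe]
      exact hN.mul_le_right x e
  rw [← h1, h2]

lemma rank_neg {R : Type} [Ring R] {N : R → ℝ}
    (hN : IsPseudoRankFunction N) (x : R) : N (-x) ≤ N x := by
  have := hN.mul_le_right (-1) x
  simpa using this

/-- **Lemma 4.3(c)** (Ara–Claramunt). For a pseudo-rank function `N` on a `*`-regular ring,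
`N (LP r - LP s) ≤ 4 N (r - s)` and `N (RP r - RP s) ≤ 4 N (r - s)`. -/
theorem statement9 (R : Type) [Ring R] [StarRing R]
    (hreg : VNRegular R) (hproper : ProperStar R)
    (N : R → ℝ) (hN : IsPseudoRankFunction N)
    (r s er es fr fs : R)
    (her : IsLeftProjOf r er) (hes : IsLeftProjOf s es)
    (hfr : IsRightProjOf r fr) (hfs : IsRightProjOf s fs) :
    N (er - es) ≤ 4 * N (r - s) ∧ N (fr - fs) ≤ 4 * N (r - s) := by
  have hNrs : 0 ≤ N (r - s) := hN.nonneg _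
  obtain ⟨⟨herstar, -⟩, herr, y, hery⟩ := her
  obtain ⟨⟨hesstar, -⟩, hess, y', hesy⟩ := hes
  obtain ⟨⟨hfrstar, -⟩, hrfr, u, hfru⟩ := hfr
  obtain ⟨⟨hfsstar, -⟩, hsfs, u', hfsu⟩ := hfs
  constructor
  · -- left projections
    have hA : N ((1 - es) * er) ≤ N (r - s) := by
      have h0 : (1 - es) * er = (1 - es) * (r - s) * y := by
        have hzero : (1 - es) * s = 0 := by rw [sub_mul, one_mul, hess, sub_self]
        have heq : (1 - es) * (r - s) = (1 - es) * r := by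
          rw [mul_sub, hzero, sub_zero]
        rw [hery, heq, mul_assoc]
      rw [h0]
      exact le_trans (hN.mul_le_left _ _) (hN.mul_le_right _ _)
    have hB : N ((1 - er) * es) ≤ N (r - s) := by
      have h0 : (1 - er) * es = (1 - er) * (s - r) * y' := by
        have hzero : (1 - er) * r = 0 := by rw [sub_mul, one_mul, herr, sub_self]
        have heq : (1 - er) * (s - r) = (1 - er) * s := by
          rw [mul_sub, hzero, sub_zero]
        rw [hesy, heq, mul_assoc]
      have h1 : N ((1 - er) * (s - r) * y') ≤ N ((1 - er) * (s - r)) :=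
        hN.mul_le_left _ _
      have h2 : N ((1 - er) * (s - r)) ≤ N (s - r) := hN.mul_le_right _ _
      have h3 : N (s - r) ≤ N (r - s) := by
        have := rank_neg hN (r - s)
        simpa [neg_sub] using this
      rw [h0]; exact le_trans h1 (le_trans h2 h3)
    have hB' : N (es * (1 - er)) ≤ N (r - s) := by
      have hst : star ((1 - er) * es) = es * (1 - er) := by
        simp [star_sub, herstar, hesstar, star_mul]
      calc N (es * (1 - er)) = N ((1 - er) * es) := by
            rw [← hst, rank_star hreg hproper hN]
        _ ≤ N (r - s) := hB
    have hdecomp : er - es = (1 - es) * er - es * (1 - er) := by noncomm_ring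
    calc N (er - es) = N ((1 - es) * er + -(es * (1 - er))) := by
          rw [hdecomp, sub_eq_add_neg]
      _ ≤ N ((1 - es) * er) + N (-(es * (1 - er))) := hN.subadditive _ _
      _ ≤ N (r - s) + N (es * (1 - er)) := add_le_add hA (rank_neg hN _)
      _ ≤ N (r - s) + N (r - s) := add_le_add le_rfl hB'
      _ ≤ 4 * N (r - s) := by linarith
  · -- right projections
    have hA : N (fr * (1 - fs)) ≤ N (r - s) := by
      have h0 : fr * (1 - fs) = u * ((r - s) * (1 - fs)) := by
        have hzero : s * (1 - fs) = 0 := by rw [mul_sub, mul_one, hsfs, sub_self]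
        have heq : (r - s) * (1 - fs) = r * (1 - fs) := by
          rw [sub_mul, hzero, sub_zero]
        rw [hfru, heq, mul_assoc]
      rw [h0]
      exact le_trans (hN.mul_le_right _ _) (hN.mul_le_left _ _)
    have hB : N (fs * (1 - fr)) ≤ N (r - s) := by
      have h0 : fs * (1 - fr) = u' * ((s - r) * (1 - fr)) := by
        have hzero : r * (1 - fr) = 0 := by rw [mul_sub, mul_one, hrfr, sub_self]
        have heq : (s - r) * (1 - fr) = s * (1 - fr) := by
          rw [sub_mul, hzero, sub_zero]
        rw [hfsu, heq, mul_assoc]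
      have h3 : N (s - r) ≤ N (r - s) := by
        have := rank_neg hN (r - s)
        simpa [neg_sub] using this
      rw [h0]
      exact le_trans (hN.mul_le_right _ _) (le_trans (hN.mul_le_left _ _) h3)
    have hB' : N ((1 - fr) * fs) ≤ N (r - s) := by
      have hst : star (fs * (1 - fr)) = (1 - fr) * fs := by
        simp [star_sub, hfrstar, hfsstar, star_mul]
      calc N ((1 - fr) * fs) = N (fs * (1 - fr)) := by
            rw [← hst, rank_star hreg hproper hN]
        _ ≤ N (r - s) := hB
    have hdecomp : fr - fs = fr * (1 - fs) - (1 - fr) * fs := by noncomm_ring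
    calc N (fr - fs) = N (fr * (1 - fs) + -((1 - fr) * fs)) := by
          rw [hdecomp, sub_eq_add_neg]
      _ ≤ N (fr * (1 - fs)) + N (-((1 - fr) * fs)) := hN.subadditive _ _
      _ ≤ N (r - s) + N ((1 - fr) * fs) := add_le_add hA (rank_neg hN _)
      _ ≤ N (r - s) + N (r - s) := add_le_add le_rfl hB'
      _ ≤ 4 * N (r - s) := by linarith

end AraClaramunt
end
end

section
/- Let N be a pseudo-rank function on a *-regular ring R, and suppose e_1, e_2, f_1, f_2 are projections in R such that f_1 is *-equivalent to f_2 and N(e_i - f_i) <= eps for i = 1, 2. Then there exist projections e_1' <= e_1 and e_2' <= e_2 such that e_1' is *-equivalent to e_2' and N(e_i - e_i') <= 5 eps for i = 1, 2. -/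
open scoped TensorProduct Kronecker

noncomputable section

namespace AraClaramunt


/-- In a ring with proper involution, `x * x* = 0` implies `x = 0`. -/
lemma properStar_mul_star {R : Type*} [Ring R] [StarRing R] (hp : ProperStar R) {x : R}
    (h : x * star x = 0) : x = 0 := by
  have h' : star (star x) * star x = 0 := by simpa using h
  have hx := hp (star x) h'
  simpa using congrArg star hx

/-- In a `*`-regular ring, every element has a left projection: a projection `g`
with `g * x = x` and `g ∈ x R`. -/
lemma lp_lemma {R : Type*} [Ring R] [StarRing R] (hreg : VNRegular R) (hp : ProperStar R)
    (x : R) : ∃ g c : R, IsProjection g ∧ g * x = x ∧ g = x * c := by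
  obtain ⟨y₀, hy₀⟩ := hreg (star x * x)
  set a : R := star x * x with ha
  have hastar : star a = a := by simp [ha, star_mul, mul_assoc]
  have h1 : a * star y₀ * a = a := by
    have h := congrArg star hy₀
    simp only [star_mul, hastar] at h
    rw [mul_assoc]
    exact h.symm
  set y : R := y₀ * a * star y₀ with hy
  have hystar : star y = y := by
    rw [hy]; simp [star_mul, hastar, mul_assoc]
  have haya : a * y * a = a := by
    calc a * y * a = (a * y₀ * a) * (star y₀ * a) := by rw [hy]; noncomm_ring
    _ = a * (star y₀ * a) := by rw [← hy₀]
    _ = a := by rw [← mul_assoc]; exact h1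
  have cancel : ∀ b : R, a * b = 0 → x * b = 0 := by
    intro b hb
    apply hp
    calc star (x * b) * (x * b) = star b * ((star x * x) * b) := by
          simp only [star_mul]; noncomm_ring
    _ = star b * (a * b) := by rw [← ha]
    _ = 0 := by rw [hb, mul_zero]
  have hxya : x * (y * a) = x := by
    have hz : a * (y * a - 1) = 0 := by
      have h : a * (y * a - 1) = a * y * a - a := by noncomm_ring
      rw [h, haya, sub_self]
    have h2 := cancel _ hz
    have e : x * (y * a - 1) = x * (y * a) - x := by noncomm_ring
    rw [e] at h2
    exact sub_eq_zero.mp h2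
  have hgx : (x * y * star x) * x = x := by
    have h : (x * y * star x) * x = x * (y * (star x * x)) := by noncomm_ring
    rw [← ha] at h
    rw [h]
    exact hxya
  have hgs : star (x * y * star x) = x * y * star x := by
    simp [star_mul, hystar, mul_assoc]
  have hgg : (x * y * star x) * (x * y * star x) = x * y * star x := by
    calc (x * y * star x) * (x * y * star x)
        = ((x * y * star x) * x) * (y * star x) := by noncomm_ring
    _ = x * (y * star x) := by rw [hgx]
    _ = x * y * star x := by rw [← mul_assoc]
  exact ⟨x * y * star x, y * star x, ⟨hgs, hgg⟩, hgx, by rw [mul_assoc]⟩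

/-- Meet of two projections in a `*`-regular ring, with rank estimates. -/
lemma meet_lemma {R : Type*} [Ring R] [StarRing R] (hreg : VNRegular R) (hp : ProperStar R)
    {N : R → ℝ} (hN : IsPseudoRankFunction N) (e f : R)
    (he : IsProjection e) (hf : IsProjection f) :
    ∃ r : R, IsProjection r ∧ ProjLE r e ∧ ProjLE r f ∧
      N (e - r) ≤ N (e - f) ∧ N (f - r) ≤ N (e - f) := by
  obtain ⟨g, c, ⟨hgs, hgi⟩, hgx, hgc⟩ := lp_lemma hreg hp (e * (1 - f))
  obtain ⟨g', c', ⟨hg's, hg'i⟩, hg'x, hg'c⟩ := lp_lemma hreg hp (f * (1 - e))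
  obtain ⟨hes, hei⟩ := he
  obtain ⟨hfs, hfi⟩ := hf
  have heg : e * g = g := by
    rw [hgc]
    calc e * (e * (1 - f) * c) = (e * e) * ((1 - f) * c) := by noncomm_ring
    _ = e * ((1 - f) * c) := by rw [hei]
    _ = e * (1 - f) * c := by noncomm_ring
  have hge : g * e = g := by
    have h := congrArg star heg
    rwa [star_mul, hgs, hes] at h
  have hfg' : f * g' = g' := by
    rw [hg'c]
    calc f * (f * (1 - e) * c') = (f * f) * ((1 - e) * c') := by noncomm_ring
    _ = f * ((1 - e) * c') := by rw [hfi]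
    _ = f * (1 - e) * c' := by noncomm_ring
  have hg'f : g' * f = g' := by
    have h := congrArg star hfg'
    rwa [star_mul, hg's, hfs] at h
  set r : R := e - g with hr
  set r' : R := f - g' with hr'
  have hrs : star r = r := by rw [hr, star_sub, hes, hgs]
  have hr's : star r' = r' := by rw [hr', star_sub, hfs, hg's]
  have hre : r * e = r := by rw [hr, sub_mul, hei, hge]
  have her : e * r = r := by rw [hr, mul_sub, hei, heg]
  have hr'f : r' * f = r' := by rw [hr', sub_mul, hfi, hg'f]
  have hfr' : f * r' = r' := by rw [hr', mul_sub, hfi, hfg']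
  have hrf0 : r * (1 - f) = 0 := by
    have h2 : g * (1 - f) = e * (1 - f) := by
      calc g * (1 - f) = (g * e) * (1 - f) := by rw [hge]
      _ = g * (e * (1 - f)) := by rw [mul_assoc]
      _ = e * (1 - f) := hgx
    rw [hr, sub_mul, h2, sub_self]
  have hr'e0 : r' * (1 - e) = 0 := by
    have h2 : g' * (1 - e) = f * (1 - e) := by
      calc g' * (1 - e) = (g' * f) * (1 - e) := by rw [hg'f]
      _ = g' * (f * (1 - e)) := by rw [mul_assoc]
      _ = f * (1 - e) := hg'x
    rw [hr', sub_mul, h2, sub_self]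
  have hrf : r * f = r := by
    have h := hrf0
    rw [mul_sub, mul_one] at h
    exact (sub_eq_zero.mp h).symm
  have hfr : f * r = r := by
    have h := congrArg star hrf
    rwa [star_mul, hrs, hfs] at h
  have hri : r * r = r := by
    rw [hr]
    calc (e - g) * (e - g) = e * e - e * g - g * e + g * g := by noncomm_ring
    _ = e - g := by rw [hei, heg, hge, hgi]; abel
  have hrg' : r * g' = 0 := by
    rw [hg'c]
    have hx' : r * (f * (1 - e)) = 0 := by
      calc r * (f * (1 - e)) = (r * f) * (1 - e) := by rw [mul_assoc]
      _ = r * (1 - e) := by rw [hrf]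
      _ = r - r * e := by rw [mul_sub, mul_one]
      _ = 0 := by rw [hre, sub_self]
    calc r * (f * (1 - e) * c') = (r * (f * (1 - e))) * c' := by noncomm_ring
    _ = 0 := by rw [hx', zero_mul]
  have hr'g : r' * g = 0 := by
    rw [hgc]
    have hx' : r' * (e * (1 - f)) = 0 := by
      calc r' * (e * (1 - f)) = (r' * e) * (1 - f) := by rw [mul_assoc]
      _ = r' * (1 - f) := by
          have h := hr'e0
          rw [mul_sub, mul_one] at h
          rw [(sub_eq_zero.mp h).symm]
      _ = r' - r' * f := by rw [mul_sub, mul_one]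
      _ = 0 := by rw [hr'f, sub_self]
    calc r' * (e * (1 - f) * c) = (r' * (e * (1 - f))) * c := by noncomm_ring
    _ = 0 := by rw [hx', zero_mul]
  have hrr' : r * r' = r := by rw [hr', mul_sub, hrf, hrg', sub_zero]
  have hr'r : r' * r = r' := by
    rw [hr, mul_sub, hr'g, sub_zero]
    have h := hr'e0
    rw [mul_sub, mul_one] at h
    exact (sub_eq_zero.mp h).symm
  have hreq : r = r' := by
    have h := congrArg star hrr'
    rw [star_mul, hrs, hr's] at h
    exact (hr'r.symm.trans h).symm
  refine ⟨r, ⟨hrs, hri⟩, ⟨her, hre⟩, ⟨hfr, hrf⟩, ?_, ?_⟩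
  · have h1 : e - r = g := by rw [hr, sub_sub_cancel]
    have h2 : e * (1 - f) = (e - f) * (1 - f) := by
      have h : (e - f) * (1 - f) = e * (1 - f) - (f - f * f) := by noncomm_ring
      rw [h, hfi, sub_self, sub_zero]
    rw [h1, hgc]
    calc N (e * (1 - f) * c) ≤ N (e * (1 - f)) := hN.mul_le_left _ _
    _ = N ((e - f) * (1 - f)) := by rw [h2]
    _ ≤ N (e - f) := hN.mul_le_left _ _
  · have h1 : f - r = g' := by rw [hreq, hr', sub_sub_cancel]
    have h2 : f * (1 - e) = (f - e) * (1 - e) := by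
      have h : (f - e) * (1 - e) = f * (1 - e) - (e - e * e) := by noncomm_ring
      rw [h, hei, sub_self, sub_zero]
    have h3 : N (f - e) ≤ N (e - f) := by
      have h : f - e = (-1 : R) * (e - f) := by rw [neg_one_mul, neg_sub]
      rw [h]
      exact hN.mul_le_right _ _
    rw [h1, hg'c]
    calc N (f * (1 - e) * c') ≤ N (f * (1 - e)) := hN.mul_le_left _ _
    _ = N ((f - e) * (1 - e)) := by rw [h2]
    _ ≤ N (f - e) := hN.mul_le_left _ _
    _ ≤ N (e - f) := h3

/-- **Lemma 4.3(d)** (Ara–Claramunt). If `f₁ ∼* f₂` and `N (eᵢ - fᵢ) ≤ ε`, then there are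
subprojections `eᵢ' ≤ eᵢ` with `e₁' ∼* e₂'` and `N (eᵢ - eᵢ') ≤ 5 ε`. -/
theorem statement10 (R : Type) [Ring R] [StarRing R]
    (hreg : VNRegular R) (hproper : ProperStar R)
    (N : R → ℝ) (hN : IsPseudoRankFunction N)
    (e₁ e₂ f₁ f₂ : R)
    (he₁ : IsProjection e₁) (he₂ : IsProjection e₂)
    (hf₁ : IsProjection f₁) (hf₂ : IsProjection f₂)
    (hequiv : StarEquivProj f₁ f₂)
    (ε : ℝ) (h₁ : N (e₁ - f₁) ≤ ε) (h₂ : N (e₂ - f₂) ≤ ε) :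
    ∃ e₁' e₂' : R, IsProjection e₁' ∧ IsProjection e₂' ∧
      ProjLE e₁' e₁ ∧ ProjLE e₂' e₂ ∧ StarEquivProj e₁' e₂' ∧
      N (e₁ - e₁') ≤ 5 * ε ∧ N (e₂ - e₂') ≤ 5 * ε := by
  obtain ⟨w, hw1, hw2⟩ := hequiv
  subst hw1
  subst hw2
  obtain ⟨hf₁s, hf₁i⟩ := hf₁
  obtain ⟨hf₂s, hf₂i⟩ := hf₂
  obtain ⟨p₁, ⟨hp₁s, hp₁i⟩, ⟨hep, hpe⟩, ⟨hfp, hpf⟩, hNe1p, hNf1p⟩ :=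
    meet_lemma hreg hproper hN e₁ (w * star w) he₁ ⟨hf₁s, hf₁i⟩
  have hq₂s : star (star w * p₁ * w) = star w * p₁ * w := by
    simp [star_mul, hp₁s, mul_assoc]
  have hq₂i : (star w * p₁ * w) * (star w * p₁ * w) = star w * p₁ * w := by
    calc (star w * p₁ * w) * (star w * p₁ * w)
        = star w * ((p₁ * (w * star w)) * p₁) * w := by noncomm_ring
    _ = star w * (p₁ * p₁) * w := by rw [hpf]
    _ = star w * p₁ * w := by rw [hp₁i]
  have hqf : (star w * p₁ * w) * (star w * w) = star w * p₁ * w := by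
    calc (star w * p₁ * w) * (star w * w)
        = star w * ((p₁ * (w * star w)) * w) := by noncomm_ring
    _ = star w * (p₁ * w) := by rw [hpf]
    _ = star w * p₁ * w := by rw [mul_assoc]
  have hkey : star w * (w * star w) * w = star w * w := by
    calc star w * (w * star w) * w = (star w * w) * (star w * w) := by noncomm_ring
    _ = star w * w := hf₂i
  have hdiff1 : star w * w - star w * p₁ * w = star w * (w * star w - p₁) * w := by
    have h : star w * (w * star w - p₁) * w
        = star w * (w * star w) * w - star w * p₁ * w := by noncomm_ring
    rw [h, hkey]
  have hNf2q : N (star w * w - star w * p₁ * w) ≤ ε := by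
    rw [hdiff1]
    calc N (star w * (w * star w - p₁) * w)
        ≤ N (star w * (w * star w - p₁)) := hN.mul_le_left _ _
    _ ≤ N (w * star w - p₁) := hN.mul_le_right _ _
    _ ≤ N (e₁ - w * star w) := hNf1p
    _ ≤ ε := h₁
  have hNe2q : N (e₂ - star w * p₁ * w) ≤ ε + ε := by
    calc N (e₂ - star w * p₁ * w)
        = N ((e₂ - star w * w) + (star w * w - star w * p₁ * w)) := by
          rw [sub_add_sub_cancel]
    _ ≤ N (e₂ - star w * w) + N (star w * w - star w * p₁ * w) := hN.subadditive _ _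
    _ ≤ ε + ε := add_le_add h₂ hNf2q
  obtain ⟨r, ⟨hrs, hri⟩, ⟨he2r, hre2⟩, ⟨hqr, hrq⟩, hNe2r, hNqr⟩ :=
    meet_lemma hreg hproper hN e₂ (star w * p₁ * w) he₂ ⟨hq₂s, hq₂i⟩
  have hrf₂ : r * (star w * w) = r := by
    calc r * (star w * w) = (r * (star w * p₁ * w)) * (star w * w) := by rw [hrq]
    _ = r * ((star w * p₁ * w) * (star w * w)) := by rw [mul_assoc]
    _ = r * (star w * p₁ * w) := by rw [hqf]
    _ = r := hrq
  have hwr : w * r = p₁ * (w * r) := by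
    conv_lhs => rw [← hqr]
    have h : w * ((star w * p₁ * w) * r) = ((w * star w) * p₁) * (w * r) := by
      noncomm_ring
    rw [h, hfp]
  have he₁'s : star (w * r * star w) = w * r * star w := by
    simp [star_mul, hrs, mul_assoc]
  have he₁'i : (w * r * star w) * (w * r * star w) = w * r * star w := by
    calc (w * r * star w) * (w * r * star w)
        = w * ((r * (star w * w)) * (r * star w)) := by noncomm_ring
    _ = w * (r * (r * star w)) := by rw [hrf₂]
    _ = w * (r * r) * star w := by noncomm_ring
    _ = w * r * star w := by rw [hri]
  have hp₁e₁' : p₁ * (w * r * star w) = w * r * star w := by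
    calc p₁ * (w * r * star w) = (p₁ * (w * r)) * star w := by noncomm_ring
    _ = w * r * star w := by rw [← hwr]
  have he₁'p₁ : (w * r * star w) * p₁ = w * r * star w := by
    have h := congrArg star hp₁e₁'
    rwa [star_mul, he₁'s, hp₁s] at h
  have hLE1 : ProjLE (w * r * star w) e₁ := by
    constructor
    · calc e₁ * (w * r * star w) = e₁ * (p₁ * (w * r * star w)) := by rw [hp₁e₁']
      _ = (e₁ * p₁) * (w * r * star w) := by noncomm_ring
      _ = p₁ * (w * r * star w) := by rw [hep]
      _ = w * r * star w := hp₁e₁'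
    · calc (w * r * star w) * e₁ = ((w * r * star w) * p₁) * e₁ := by rw [he₁'p₁]
      _ = (w * r * star w) * (p₁ * e₁) := by rw [mul_assoc]
      _ = (w * r * star w) * p₁ := by rw [hpe]
      _ = w * r * star w := he₁'p₁
  have hSE : StarEquivProj (w * r * star w) r := by
    refine ⟨w * r, ?_, ?_⟩
    · rw [star_mul, hrs]
      calc w * r * star w = w * (r * r) * star w := by rw [hri]
      _ = w * r * (r * star w) := by noncomm_ring
    · rw [star_mul, hrs]
      symm
      calc (r * star w) * (w * r) = (r * (star w * w)) * r := by noncomm_ring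
      _ = r * r := by rw [hrf₂]
      _ = r := hri
  have hkey2 : w * (star w * p₁ * w) * star w = p₁ := by
    calc w * (star w * p₁ * w) * star w
        = ((w * star w) * p₁) * (w * star w) := by noncomm_ring
    _ = p₁ * (w * star w) := by rw [hfp]
    _ = p₁ := hpf
  have hdiff2 : p₁ - w * r * star w = w * ((star w * p₁ * w) - r) * star w := by
    have h : w * ((star w * p₁ * w) - r) * star w
        = w * (star w * p₁ * w) * star w - w * r * star w := by noncomm_ring
    rw [h, hkey2]
  have hNp₁e₁' : N (p₁ - w * r * star w) ≤ ε + ε := by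
    rw [hdiff2]
    calc N (w * ((star w * p₁ * w) - r) * star w)
        ≤ N (w * ((star w * p₁ * w) - r)) := hN.mul_le_left _ _
    _ ≤ N ((star w * p₁ * w) - r) := hN.mul_le_right _ _
    _ ≤ N (e₂ - star w * p₁ * w) := hNqr
    _ ≤ ε + ε := hNe2q
  have hεnn : 0 ≤ ε := le_trans (hN.nonneg _) h₁
  refine ⟨w * r * star w, r, ⟨he₁'s, he₁'i⟩, ⟨hrs, hri⟩, hLE1, ⟨he2r, hre2⟩, hSE, ?_, ?_⟩
  · calc N (e₁ - w * r * star w)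
        = N ((e₁ - p₁) + (p₁ - w * r * star w)) := by rw [sub_add_sub_cancel]
    _ ≤ N (e₁ - p₁) + N (p₁ - w * r * star w) := hN.subadditive _ _
    _ ≤ ε + (ε + ε) := add_le_add (le_trans hNe1p h₁) hNp₁e₁'
    _ ≤ 5 * ε := by linarith
  · calc N (e₂ - r) ≤ N (e₂ - star w * p₁ * w) := hNe2r
    _ ≤ ε + ε := hNe2q
    _ ≤ 5 * ε := by linarith


end AraClaramunt
end
end
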